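/- arXiv:1205.5352 — 8 statements merged into one kernel-verified Lean document; each statement's English description precedes it below -/
import Mathlib

section
/- The element β = Σ_{j=1}^n f_j† f_j of 𝒞 satisfies the characteristic equation β(β − 1)(β − 2)⋯(β − n) = 0, i.e. the product ∏_{ℓ=0}^{n} (β − ℓ·1) equals 0 in 𝒞. -/
noncomputable section

/-- The quadratic form `Q(x) = -(x_1^2 + ⋯ + x_m^2)` on `ℂ^m`. -/
def Qform (m : ℕ) : QuadraticForm ℂ (Fin m → ℂ) :=
  QuadraticMap.weightedSumSquares ℂ (fun _ : Fin m => (-1 : ℂ))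

/-- The complex Clifford algebra of `ℂ^m` with `Q(x) = -∑ x_j^2`. -/
abbrev Cl (m : ℕ) : Type := CliffordAlgebra (Qform m)

/-- The generators `e_j`, images of the standard basis vectors. -/
def gen (m : ℕ) (j : Fin m) : Cl m := CliffordAlgebra.ι (Qform m) (Pi.single j 1)

/-- The Witt basis element `f_j = (1/2)(e_j - i e_{n+j})`. -/
def fw (n : ℕ) (j : Fin n) : Cl (2 * n) :=
  (2⁻¹ : ℂ) • (gen (2 * n) ⟨j.val, by have := j.isLt; omega⟩
    - Complex.I • gen (2 * n) ⟨n + j.val, by have := j.isLt; omega⟩)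

/-- The Witt basis element `f_j† = -(1/2)(e_j + i e_{n+j})`. -/
def fwd (n : ℕ) (j : Fin n) : Cl (2 * n) :=
  -((2⁻¹ : ℂ) • (gen (2 * n) ⟨j.val, by have := j.isLt; omega⟩
    + Complex.I • gen (2 * n) ⟨n + j.val, by have := j.isLt; omega⟩))

/-- The Hermitian vector variable `𝐳 = ∑ z_j f_j`. -/
def zvec (n : ℕ) (z : Fin n → ℂ) : Cl (2 * n) := ∑ j, z j • fw n j

/-- The Hermitian conjugate vector variable `𝐳† = ∑ conj(z_j) f_j†`. -/
def zvecd (n : ℕ) (z : Fin n → ℂ) : Cl (2 * n) :=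
  ∑ j, (starRingEnd ℂ) (z j) • fwd n j

/-- The fermionic Euler operator `β = ∑ f_j† f_j`. -/
def beta (n : ℕ) : Cl (2 * n) := ∑ j, fwd n j * fw n j

/-! ### Auxiliary lemmas -/

section Generators

lemma gen_sq (m : ℕ) (j : Fin m) : gen m j * gen m j = -1 := by
  rw [gen, CliffordAlgebra.ι_sq_scalar]
  have : Qform m (Pi.single j 1) = -1 := by
    simp [Qform, QuadraticMap.weightedSumSquares_apply, Pi.single_apply]
  rw [this, map_neg, map_one]

lemma gen_anticomm (m : ℕ) (j k : Fin m) (h : j ≠ k) :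
    gen m j * gen m k = -(gen m k * gen m j) := by
  have H := CliffordAlgebra.ι_mul_ι_add_swap (Q := Qform m) (Pi.single j 1) (Pi.single k 1)
  have hp : QuadraticMap.polar (Qform m) (Pi.single j 1) (Pi.single k 1) = 0 := by
    simp [QuadraticMap.polar, Qform, QuadraticMap.weightedSumSquares_apply,
      Pi.single_apply, h, add_mul, mul_add, Finset.sum_add_distrib, Ne.symm h]
  rw [hp, map_zero] at H
  rw [gen, gen, eq_neg_of_add_eq_zero_left H]

end Generators

section Generic

variable {A : Type*} [Ring A] [Algebra ℂ A]

lemma gsq_zero (a b : A) (ha : a*a = -1) (hb : b*b = -1) (hab : a*b = -(b*a)) :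
    ((2⁻¹ : ℂ) • (a - Complex.I • b)) * ((2⁻¹ : ℂ) • (a - Complex.I • b)) = 0 := by
  simp only [smul_mul_assoc, mul_smul_comm, sub_mul, mul_sub, smul_sub, smul_smul,
    ha, hb, hab, smul_neg, neg_neg]
  match_scalars <;> ring_nf <;> simp [Complex.I_sq] <;> ring

lemma gdsq_zero (a b : A) (ha : a*a = -1) (hb : b*b = -1) (hab : a*b = -(b*a)) :
    (-((2⁻¹ : ℂ) • (a + Complex.I • b))) * (-((2⁻¹ : ℂ) • (a + Complex.I • b))) = 0 := by
  simp only [neg_mul, mul_neg, neg_neg, smul_mul_assoc, mul_smul_comm, add_mul, mul_add,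
    smul_add, smul_smul, ha, hb, hab, smul_neg]
  match_scalars <;> ring_nf <;> simp [Complex.I_sq] <;> ring

lemma ganti_one (a b : A) (ha : a*a = -1) (hb : b*b = -1) (hab : a*b = -(b*a)) :
    ((2⁻¹ : ℂ) • (a - Complex.I • b)) * (-((2⁻¹ : ℂ) • (a + Complex.I • b)))
    + (-((2⁻¹ : ℂ) • (a + Complex.I • b))) * ((2⁻¹ : ℂ) • (a - Complex.I • b)) = 1 := by
  simp only [neg_mul, mul_neg, smul_mul_assoc, mul_smul_comm, add_mul, mul_add,
    sub_mul, mul_sub, smul_add, smul_sub, smul_smul, ha, hb, hab, smul_neg]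
  rw [show (1:A) = (1:ℂ) • 1 by simp]
  match_scalars <;> ring_nf <;> simp [Complex.I_sq] <;> ring

lemma anticomm_lin (a b c d : A)
    (h1 : a*c = -(c*a)) (h2 : a*d = -(d*a)) (h3 : b*c = -(c*b)) (h4 : b*d = -(d*b))
    (α β γ δ : ℂ) :
    (α • a + β • b) * (γ • c + δ • d) = -((γ • c + δ • d) * (α • a + β • b)) := by
  simp only [add_mul, mul_add, smul_mul_assoc, mul_smul_comm, h1, h2, h3, h4, smul_neg]
  module

lemma comm_of_anti (x c d : A) (h1 : x*c = -(c*x)) (h2 : x*d = -(d*x)) :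
    Commute x (c*d) := by
  show x * (c*d) = (c*d) * x
  calc x * (c*d) = (x*c)*d := by rw [mul_assoc]
    _ = -(c*(x*d)) := by rw [h1, neg_mul, mul_assoc]
    _ = -(c*(-(d*x))) := by rw [h2]
    _ = (c*d)*x := by rw [mul_neg, neg_neg, ← mul_assoc]

end Generic

section Abstract

lemma step_lemma {A : Type*} [Ring A] (e a : A) (he : e*e = e) (hc : Commute e a) (n : ℕ)
    (ha : ((List.range (n+1)).map (fun l : ℕ => a - (l : A))).prod = 0) :
    ((List.range (n+2)).map (fun l : ℕ => (e + a) - (l : A))).prod = 0 := by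
  have key1 : ∀ L : List ℕ,
      e * ((L.map (fun l : ℕ => (e + a) - (l : A))).prod)
        = e * ((L.map (fun l : ℕ => (a + 1) - (l : A))).prod) := by
    intro L
    induction L with
    | nil => rfl
    | cons l L ih =>
      have hcomm : Commute e ((a+1) - (l:A)) :=
        Commute.sub_right (Commute.add_right hc (Commute.one_right e)) (Nat.cast_commute l e).symm
      have h5 : e * ((e + a) - (l:A)) = ((a+1) - (l:A)) * e := by
        have h6 : e * ((e+a) - (l:A)) = e * ((a+1) - (l:A)) := by
          rw [mul_sub, mul_sub, mul_add, mul_add, he, mul_one]; abel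
        rw [h6]; exact hcomm.eq
      calc e * ((List.map (fun l : ℕ => (e + a) - (l : A)) (l :: L)).prod)
          = (e * ((e+a) - (l:A))) * (L.map (fun l : ℕ => (e + a) - (l : A))).prod := by
            simp [mul_assoc]
        _ = ((a+1) - (l:A)) * (e * (L.map (fun l : ℕ => (e + a) - (l : A))).prod) := by
            rw [h5, mul_assoc]
        _ = ((a+1) - (l:A)) * (e * (L.map (fun l : ℕ => (a + 1) - (l : A))).prod) := by rw [ih]
        _ = (((a+1) - (l:A)) * e) * (L.map (fun l : ℕ => (a + 1) - (l : A))).prod := by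
            rw [mul_assoc]
        _ = e * ((List.map (fun l : ℕ => (a + 1) - (l : A)) (l :: L)).prod) := by
            rw [← hcomm.eq]; simp [mul_assoc]
  have key2 : ∀ L : List ℕ,
      (1-e) * ((L.map (fun l : ℕ => (e + a) - (l : A))).prod)
        = (1-e) * ((L.map (fun l : ℕ => a - (l : A))).prod) := by
    intro L
    induction L with
    | nil => rfl
    | cons l L ih =>
      have hcomm : Commute (1-e) (a - (l:A)) :=
        Commute.sub_right (Commute.sub_left (Commute.one_left a) hc)
          (Nat.cast_commute l (1-e)).symm
      have h5 : (1-e) * ((e + a) - (l:A)) = (a - (l:A)) * (1-e) := by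
        have h6 : (1-e) * ((e+a) - (l:A)) = (1-e) * (a - (l:A)) := by
          rw [sub_mul, sub_mul, one_mul, one_mul, mul_sub, mul_sub, mul_add, he]; abel
        rw [h6]; exact hcomm.eq
      calc (1-e) * ((List.map (fun l : ℕ => (e + a) - (l : A)) (l :: L)).prod)
          = ((1-e) * ((e+a) - (l:A))) * (L.map (fun l : ℕ => (e + a) - (l : A))).prod := by
            simp [mul_assoc]
        _ = (a - (l:A)) * ((1-e) * (L.map (fun l : ℕ => (e + a) - (l : A))).prod) := by
            rw [h5, mul_assoc]
        _ = (a - (l:A)) * ((1-e) * (L.map (fun l : ℕ => a - (l : A))).prod) := by rw [ih]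
        _ = ((a - (l:A)) * (1-e)) * (L.map (fun l : ℕ => a - (l : A))).prod := by
            rw [mul_assoc]
        _ = (1-e) * ((List.map (fun l : ℕ => a - (l : A)) (l :: L)).prod) := by
            rw [← hcomm.eq]; simp [mul_assoc]
  set P := ((List.range (n+2)).map (fun l : ℕ => (e + a) - (l : A))).prod with hP
  have hsplit : P = e * P + (1-e) * P := by rw [← add_mul]; simp
  have h1 : e * P = 0 := by
    rw [hP, key1]
    have : ((List.range (n+2)).map (fun l : ℕ => (a+1) - (l : A))).prod = 0 := by
      rw [List.range_succ_eq_map]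
      simp only [List.map_cons, List.prod_cons, List.map_map]
      have hm : ((List.range (n+1)).map ((fun l : ℕ => (a+1) - (l : A)) ∘ Nat.succ)).prod
          = ((List.range (n+1)).map (fun l : ℕ => a - (l : A))).prod := by
        congr 1
        apply List.map_congr_left
        intro l _
        simp only [Function.comp_apply, Nat.succ_eq_add_one]
        push_cast
        abel
      rw [hm, ha, mul_zero]
    rw [this, mul_zero]
  have h2 : (1-e) * P = 0 := by
    rw [hP, key2]
    have : ((List.range (n+2)).map (fun l : ℕ => a - (l : A))).prod = 0 := by
      rw [show n+2 = (n+1)+1 from rfl, List.range_succ]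
      simp only [List.map_append, List.prod_append, List.map_cons, List.prod_cons,
        List.map_nil, List.prod_nil]
      rw [ha, zero_mul]
    rw [this, mul_zero]
  rw [hsplit, h1, h2, add_zero]

lemma sum_idem {A : Type*} [Ring A] {ι : Type*} [DecidableEq ι] (e : ι → A)
    (hid : ∀ j, e j * e j = e j) (hcomm : ∀ j k, Commute (e j) (e k)) (s : Finset ι) :
    ((List.range (s.card + 1)).map (fun l : ℕ => (∑ j ∈ s, e j) - (l : A))).prod = 0 := by
  induction s using Finset.induction with
  | empty =>
    have : (Finset.card (∅ : Finset ι) + 1) = 1 := by simp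
    rw [this, show List.range 1 = [0] from rfl]
    simp
  | @insert a s hnm ih =>
    rw [Finset.sum_insert hnm, Finset.card_insert_of_notMem hnm]
    exact step_lemma (e a) (∑ j ∈ s, e j) (hid a)
      (Commute.sum_right _ _ _ (fun j _ => hcomm a j)) s.card ih

end Abstract

section Witt

variable (n : ℕ)

/-- First index of the pair for `j`. -/
def idx1 (j : Fin n) : Fin (2*n) := ⟨j.val, by have := j.isLt; omega⟩
/-- Second index of the pair for `j`. -/
def idx2 (j : Fin n) : Fin (2*n) := ⟨n + j.val, by have := j.isLt; omega⟩

lemma fw_def (j : Fin n) :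
    fw n j = (2⁻¹ : ℂ) • (gen (2*n) (idx1 n j) - Complex.I • gen (2*n) (idx2 n j)) := rfl

lemma fwd_def (j : Fin n) :
    fwd n j = -((2⁻¹ : ℂ) • (gen (2*n) (idx1 n j) + Complex.I • gen (2*n) (idx2 n j))) := rfl

lemma idx_ne (j : Fin n) : idx1 n j ≠ idx2 n j := by
  intro h
  have := congrArg Fin.val h
  simp [idx1, idx2] at this
  omega

lemma fw_sq (j : Fin n) : fw n j * fw n j = 0 := by
  rw [fw_def]
  exact gsq_zero _ _ (gen_sq _ _) (gen_sq _ _) (gen_anticomm _ _ _ (idx_ne n j))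

lemma fwd_sq (j : Fin n) : fwd n j * fwd n j = 0 := by
  rw [fwd_def]
  exact gdsq_zero _ _ (gen_sq _ _) (gen_sq _ _) (gen_anticomm _ _ _ (idx_ne n j))

lemma fw_fwd_anti (j : Fin n) : fw n j * fwd n j + fwd n j * fw n j = 1 := by
  rw [fw_def, fwd_def]
  exact ganti_one _ _ (gen_sq _ _) (gen_sq _ _) (gen_anticomm _ _ _ (idx_ne n j))

lemma fw_lin (j : Fin n) :
    fw n j = (2⁻¹ : ℂ) • gen (2*n) (idx1 n j) + (-(2⁻¹ * Complex.I)) • gen (2*n) (idx2 n j) := by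
  rw [fw_def]; module

lemma fwd_lin (j : Fin n) :
    fwd n j = (-(2⁻¹ : ℂ)) • gen (2*n) (idx1 n j)
      + (-(2⁻¹ * Complex.I)) • gen (2*n) (idx2 n j) := by
  rw [fwd_def]; module

lemma cross_anti {j k : Fin n} (h : j ≠ k)
    (x y : Cl (2*n)) (α β γ δ : ℂ)
    (hx : x = α • gen (2*n) (idx1 n j) + β • gen (2*n) (idx2 n j))
    (hy : y = γ • gen (2*n) (idx1 n k) + δ • gen (2*n) (idx2 n k)) :
    x * y = -(y * x) := by
  have hval : j.val ≠ k.val := fun hv => h (Fin.ext hv)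
  have hjk : j.val < n := j.isLt
  have hkk : k.val < n := k.isLt
  have e11 : idx1 n j ≠ idx1 n k := by
    intro hh; exact hval (by simpa [idx1, Fin.ext_iff] using hh)
  have e12 : idx1 n j ≠ idx2 n k := by
    intro hh; have := (Fin.ext_iff.mp hh); simp [idx1, idx2] at this; omega
  have e21 : idx2 n j ≠ idx1 n k := by
    intro hh; have := (Fin.ext_iff.mp hh); simp [idx1, idx2] at this; omega
  have e22 : idx2 n j ≠ idx2 n k := by
    intro hh; have := (Fin.ext_iff.mp hh); simp [idx1, idx2] at this; omega
  rw [hx, hy]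
  exact anticomm_lin _ _ _ _
    (gen_anticomm _ _ _ e11) (gen_anticomm _ _ _ e12)
    (gen_anticomm _ _ _ e21) (gen_anticomm _ _ _ e22) _ _ _ _

lemma b_idem (j : Fin n) : (fwd n j * fw n j) * (fwd n j * fw n j) = fwd n j * fw n j := by
  have h1 : fw n j * fwd n j = 1 - fwd n j * fw n j := by
    exact eq_sub_of_add_eq (fw_fwd_anti n j)
  calc (fwd n j * fw n j) * (fwd n j * fw n j)
      = fwd n j * ((fw n j * fwd n j) * fw n j) := by simp [mul_assoc]
    _ = fwd n j * ((1 - fwd n j * fw n j) * fw n j) := by rw [h1]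
    _ = fwd n j * fw n j - (fwd n j * fwd n j) * (fw n j * fw n j) := by
        rw [sub_mul, one_mul, mul_sub]; simp [mul_assoc]
    _ = fwd n j * fw n j := by rw [fwd_sq, zero_mul, sub_zero]

lemma b_comm (j k : Fin n) :
    Commute (fwd n j * fw n j) (fwd n k * fw n k) := by
  rcases eq_or_ne j k with rfl | h
  · exact Commute.refl _
  · have hjk := h
    have a1 : Commute (fwd n j) (fwd n k * fw n k) :=
      comm_of_anti _ _ _
        (cross_anti n hjk _ _ _ _ _ _ (fwd_lin n j) (fwd_lin n k))
        (cross_anti n hjk _ _ _ _ _ _ (fwd_lin n j) (fw_lin n k))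
    have a2 : Commute (fw n j) (fwd n k * fw n k) :=
      comm_of_anti _ _ _
        (cross_anti n hjk _ _ _ _ _ _ (fw_lin n j) (fwd_lin n k))
        (cross_anti n hjk _ _ _ _ _ _ (fw_lin n j) (fw_lin n k))
    exact Commute.mul_left a1 a2

end Witt

/-- The fermionic Euler operator `β = ∑ f_j† f_j` satisfies the
characteristic equation `β(β-1)⋯(β-n) = 0` (ordered product over `ℓ = 0,…,n`). -/
theorem beta_characteristic_equation (n : ℕ) (hn : 1 ≤ n) :
    (((List.range (n + 1)).map
      (fun l => beta n - (l : ℂ) • (1 : Cl (2 * n)))).prod) = 0 := by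
  have hcast : ∀ l : ℕ, ((l : ℂ) • (1 : Cl (2 * n))) = (l : Cl (2 * n)) := by
    intro l
    rw [Algebra.smul_def, mul_one, map_natCast]
  have key := sum_idem (fun j : Fin n => fwd n j * fw n j) (b_idem n) (b_comm n)
    (Finset.univ : Finset (Fin n))
  simp only [Finset.card_univ, Fintype.card_fin] at key
  rw [show (do let a ← List.range (n+1); pure ((a : ℂ)))
      = (List.range (n+1)).map (fun a : ℕ => (a : ℂ)) from List.map_eq_flatMap.symm,
    List.map_map]
  have hbeta : beta n = ∑ j ∈ (Finset.univ : Finset (Fin n)), fwd n j * fw n j := rfl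
  simpa only [Function.comp_def, hcast, hbeta] using key
end
end

section
/- The element I = f_1 f_1† f_2 f_2† ⋯ f_n f_n† of 𝒞 is a nonzero idempotent (I ≠ 0 and I² = I), and f_j I = 0 for every j = 1,…,n. -/
noncomputable section

/-- The primitive idempotent `I = f_1 f_1† f_2 f_2† ⋯ f_n f_n†` (ordered product). -/
def idem (n : ℕ) : Cl (2 * n) := (List.ofFn (fun j : Fin n => fw n j * fwd n j)).prod

namespace IdemAux
open CliffordAlgebra

/-- first single -/
def s1 (n : ℕ) (j : Fin n) : Fin (2*n) → ℂ := Pi.single ⟨j.val, by have := j.isLt; omega⟩ 1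
def s2 (n : ℕ) (j : Fin n) : Fin (2*n) → ℂ := Pi.single ⟨n + j.val, by have := j.isLt; omega⟩ 1

def va (n : ℕ) (j : Fin n) : Fin (2*n) → ℂ := (2⁻¹:ℂ) • s1 n j + (-(Complex.I * 2⁻¹)) • s2 n j
def vb (n : ℕ) (j : Fin n) : Fin (2*n) → ℂ := (-2⁻¹:ℂ) • s1 n j + (-(Complex.I * 2⁻¹)) • s2 n j

lemma fw_eq (n : ℕ) (j : Fin n) : fw n j = ι (Qform (2*n)) (va n j) := by
  rw [va, map_add, map_smul, map_smul]
  rw [fw, gen, gen]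
  show _ = (2⁻¹:ℂ) • ι (Qform (2*n)) (s1 n j) + (-(Complex.I * 2⁻¹)) • ι (Qform (2*n)) (s2 n j)
  rw [s1, s2]
  module

end IdemAux
namespace IdemAux
open CliffordAlgebra

lemma fwd_eq (n : ℕ) (j : Fin n) : fwd n j = ι (Qform (2*n)) (vb n j) := by
  rw [vb, map_add, map_smul, map_smul]
  rw [fwd, gen, gen]
  show _ = (-2⁻¹:ℂ) • ι (Qform (2*n)) (s1 n j) + (-(Complex.I * 2⁻¹)) • ι (Qform (2*n)) (s2 n j)
  rw [s1, s2]
  module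

lemma Qform_apply (m : ℕ) (v : Fin m → ℂ) : Qform m v = -∑ i, v i * v i := by
  rw [Qform, QuadraticMap.weightedSumSquares_apply]
  simp [← Finset.sum_neg_distrib]

lemma polar_eval (m : ℕ) (v w : Fin m → ℂ) :
    QuadraticMap.polar (Qform m) v w = -2 * ∑ i, v i * w i := by
  rw [QuadraticMap.polar, Qform_apply, Qform_apply, Qform_apply, Finset.mul_sum,
    sub_neg_eq_add, sub_neg_eq_add, ← Finset.sum_neg_distrib,
    ← Finset.sum_add_distrib, ← Finset.sum_add_distrib]
  refine Finset.sum_congr rfl fun i _ => ?_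
  simp only [Pi.add_apply]
  ring

lemma dot_single (m : ℕ) (a b : Fin m) :
    ∑ i, (Pi.single a 1 : Fin m → ℂ) i * (Pi.single b 1 : Fin m → ℂ) i
      = if a = b then 1 else 0 := by
  simp [Pi.single_apply, eq_comm]

lemma dot_expand (m : ℕ) (c₁ c₂ d₁ d₂ : ℂ) (f g h k : Fin m → ℂ) :
    ∑ i, ((c₁ • f + c₂ • g) i * (d₁ • h + d₂ • k) i)
      = c₁*d₁ * (∑ i, f i * h i) + c₁*d₂ * (∑ i, f i * k i)
        + c₂*d₁ * (∑ i, g i * h i) + c₂*d₂ * (∑ i, g i * k i) := by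
  simp only [Finset.mul_sum, ← Finset.sum_add_distrib]
  refine Finset.sum_congr rfl fun i _ => ?_
  simp only [Pi.add_apply, Pi.smul_apply, smul_eq_mul]
  ring

end IdemAux
namespace IdemAux
open CliffordAlgebra

lemma s1_ne_s2_idx (n : ℕ) (j k : Fin n) :
    (⟨j.val, by have := j.isLt; omega⟩ : Fin (2*n)) ≠ ⟨n + k.val, by have := k.isLt; omega⟩ := by
  simp only [ne_eq, Fin.mk.injEq]
  have := j.isLt; omega

lemma dot_comb (n : ℕ) (j k : Fin n) (c₁ c₂ d₁ d₂ : ℂ) :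
    ∑ i, ((c₁ • s1 n j + c₂ • s2 n j) i * (d₁ • s1 n k + d₂ • s2 n k) i)
      = (if j = k then c₁*d₁ + c₂*d₂ else 0) := by
  rw [s1, s2, s1, s2, dot_expand, dot_single, dot_single, dot_single, dot_single]
  rw [if_neg (s1_ne_s2_idx n j k), if_neg (Ne.symm (s1_ne_s2_idx n k j))]
  have h1 : ((⟨j.val, by have := j.isLt; omega⟩ : Fin (2*n)) = ⟨k.val, by have := k.isLt; omega⟩) ↔ j = k := by
    simp [Fin.ext_iff]
  have h2 : ((⟨n + j.val, by have := j.isLt; omega⟩ : Fin (2*n)) = ⟨n + k.val, by have := k.isLt; omega⟩) ↔ j = k := by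
    simp [Fin.ext_iff]
  rw [if_congr h1 rfl rfl, if_congr h2 rfl rfl]
  by_cases h : j = k <;> simp [h]

lemma Q_comb (n : ℕ) (j : Fin n) (c₁ c₂ : ℂ) :
    Qform (2*n) (c₁ • s1 n j + c₂ • s2 n j) = -(c₁*c₁ + c₂*c₂) := by
  rw [Qform_apply, dot_comb, if_pos rfl]

lemma polar_comb (n : ℕ) (j k : Fin n) (c₁ c₂ d₁ d₂ : ℂ) :
    QuadraticMap.polar (Qform (2*n)) (c₁ • s1 n j + c₂ • s2 n j) (d₁ • s1 n k + d₂ • s2 n k)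
      = (if j = k then -2 * (c₁*d₁ + c₂*d₂) else 0) := by
  rw [polar_eval, dot_comb]
  by_cases h : j = k <;> simp [h]

-- Clifford relations
lemma Q_va (n : ℕ) (j : Fin n) : Qform (2*n) (va n j) = 0 := by
  rw [va, Q_comb]
  ring_nf
  simp [Complex.I_sq]

lemma Q_vb (n : ℕ) (j : Fin n) : Qform (2*n) (vb n j) = 0 := by
  rw [vb, Q_comb]
  ring_nf
  simp [Complex.I_sq]

lemma fw_sq (n : ℕ) (j : Fin n) : fw n j * fw n j = 0 := by
  rw [fw_eq, ι_sq_scalar, Q_va, map_zero]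

lemma fwd_sq (n : ℕ) (j : Fin n) : fwd n j * fwd n j = 0 := by
  rw [fwd_eq, ι_sq_scalar, Q_vb, map_zero]

lemma fw_fwd_same (n : ℕ) (j : Fin n) : fw n j * fwd n j + fwd n j * fw n j = 1 := by
  rw [fw_eq, fwd_eq, ι_mul_ι_add_swap, va, vb, polar_comb, if_pos rfl]
  have h : (-2 * (2⁻¹ * -2⁻¹ + -(Complex.I * 2⁻¹) * -(Complex.I * 2⁻¹)) : ℂ) = 1 := by
    have := Complex.I_mul_I
    linear_combination (-1/2 : ℂ) * this
  rw [h, map_one]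

lemma fw_fw_anti (n : ℕ) (j k : Fin n) (h : j ≠ k) :
    fw n j * fw n k = -(fw n k * fw n j) := by
  rw [fw_eq, fw_eq]
  refine eq_neg_of_add_eq_zero_left ?_
  rw [ι_mul_ι_add_swap, va, va, polar_comb, if_neg h, map_zero]

lemma fw_fwd_anti (n : ℕ) (j k : Fin n) (h : j ≠ k) :
    fw n j * fwd n k = -(fwd n k * fw n j) := by
  rw [fw_eq, fwd_eq]
  refine eq_neg_of_add_eq_zero_left ?_
  rw [ι_mul_ι_add_swap, va, vb, polar_comb, if_neg h, map_zero]

lemma fwd_fw_anti (n : ℕ) (j k : Fin n) (h : j ≠ k) :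
    fwd n j * fw n k = -(fw n k * fwd n j) := by
  rw [fwd_eq, fw_eq]
  refine eq_neg_of_add_eq_zero_left ?_
  rw [ι_mul_ι_add_swap, vb, va, polar_comb, if_neg h, map_zero]

lemma fwd_fwd_anti (n : ℕ) (j k : Fin n) (h : j ≠ k) :
    fwd n j * fwd n k = -(fwd n k * fwd n j) := by
  rw [fwd_eq, fwd_eq]
  refine eq_neg_of_add_eq_zero_left ?_
  rw [ι_mul_ι_add_swap, vb, vb, polar_comb, if_neg h, map_zero]

end IdemAux
namespace IdemAux
open CliffordAlgebra

def P (n : ℕ) (j : Fin n) : Cl (2*n) := fw n j * fwd n j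

def prodP (n : ℕ) (l : List (Fin n)) : Cl (2*n) := (l.map (P n)).prod

lemma prodP_nil (n : ℕ) : prodP n [] = 1 := rfl
lemma prodP_cons (n : ℕ) (j : Fin n) (t : List (Fin n)) :
    prodP n (j :: t) = P n j * prodP n t := by
  rw [prodP, List.map_cons, List.prod_cons, prodP]

lemma fwd_fw_eq (n : ℕ) (j : Fin n) :
    fwd n j * fw n j = 1 - fw n j * fwd n j :=
  eq_sub_of_add_eq' (fw_fwd_same n j)

lemma P_sq (n : ℕ) (j : Fin n) : P n j * P n j = P n j := by
  calc P n j * P n j = fw n j * (fwd n j * fw n j) * fwd n j := by rw [P]; noncomm_ring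
    _ = fw n j * (1 - fw n j * fwd n j) * fwd n j := by rw [fwd_fw_eq]
    _ = fw n j * fwd n j - (fw n j * fw n j) * (fwd n j * fwd n j) := by noncomm_ring
    _ = P n j := by rw [fw_sq, fwd_sq, zero_mul, sub_zero, P]

lemma fw_comm_P (n : ℕ) (j k : Fin n) (h : j ≠ k) :
    fw n j * P n k = P n k * fw n j := by
  calc fw n j * P n k = (fw n j * fw n k) * fwd n k := by rw [P]; noncomm_ring
    _ = -(fw n k * fw n j) * fwd n k := by rw [fw_fw_anti n j k h]
    _ = -(fw n k * (fw n j * fwd n k)) := by noncomm_ring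
    _ = -(fw n k * (-(fwd n k * fw n j))) := by rw [fw_fwd_anti n j k h]
    _ = P n k * fw n j := by rw [P]; noncomm_ring

lemma fwd_comm_P (n : ℕ) (j k : Fin n) (h : j ≠ k) :
    fwd n j * P n k = P n k * fwd n j := by
  calc fwd n j * P n k = (fwd n j * fw n k) * fwd n k := by rw [P]; noncomm_ring
    _ = -(fw n k * fwd n j) * fwd n k := by rw [fwd_fw_anti n j k h]
    _ = -(fw n k * (fwd n j * fwd n k)) := by noncomm_ring
    _ = -(fw n k * (-(fwd n k * fwd n j))) := by rw [fwd_fwd_anti n j k h]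
    _ = P n k * fwd n j := by rw [P]; noncomm_ring

lemma P_comm_P (n : ℕ) (j k : Fin n) (h : j ≠ k) :
    P n j * P n k = P n k * P n j := by
  calc P n j * P n k = fw n j * (fwd n j * P n k) := by rw [P]; noncomm_ring
    _ = fw n j * (P n k * fwd n j) := by rw [fwd_comm_P n j k h]
    _ = (fw n j * P n k) * fwd n j := by noncomm_ring
    _ = (P n k * fw n j) * fwd n j := by rw [fw_comm_P n j k h]
    _ = P n k * P n j := by rw [P]; noncomm_ring

lemma P_comm_prodP (n : ℕ) (j : Fin n) (t : List (Fin n)) (hj : j ∉ t) :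
    P n j * prodP n t = prodP n t * P n j := by
  induction t with
  | nil => rw [prodP_nil, one_mul, mul_one]
  | cons k t ih =>
      have hjk : j ≠ k := fun h => hj (h ▸ List.mem_cons_self (a := k) (l := t))
      have hjt : j ∉ t := fun h => hj (List.mem_cons_of_mem _ h)
      rw [prodP_cons, ← mul_assoc, P_comm_P n j k hjk, mul_assoc, ih hjt, ← mul_assoc]

lemma prodP_idem (n : ℕ) (l : List (Fin n)) (hl : l.Nodup) :
    prodP n l * prodP n l = prodP n l := by
  induction l with
  | nil => rw [prodP_nil, one_mul]
  | cons j t ih =>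
      have hj : j ∉ t := (List.nodup_cons.mp hl).1
      have ht : t.Nodup := (List.nodup_cons.mp hl).2
      rw [prodP_cons]
      calc P n j * prodP n t * (P n j * prodP n t)
          = P n j * (prodP n t * P n j) * prodP n t := by noncomm_ring
        _ = P n j * (P n j * prodP n t) * prodP n t := by rw [← P_comm_prodP n j t hj]
        _ = (P n j * P n j) * (prodP n t * prodP n t) := by noncomm_ring
        _ = P n j * prodP n t := by rw [P_sq, ih ht]

lemma fw_mul_prodP (n : ℕ) (j : Fin n) (l : List (Fin n)) (hj : j ∈ l) :
    fw n j * prodP n l = 0 := by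
  induction l with
  | nil => exact absurd hj List.not_mem_nil
  | cons k t ih =>
      rw [prodP_cons]
      by_cases hk : k = j
      · subst hk
        calc fw n k * (P n k * prodP n t)
            = (fw n k * fw n k) * (fwd n k * prodP n t) := by rw [P]; noncomm_ring
          _ = 0 := by rw [fw_sq, zero_mul]
      · have hjt : j ∈ t := by
          rcases List.mem_cons.mp hj with h | h
          · exact absurd h.symm hk
          · exact h
        rw [← mul_assoc, fw_comm_P n j k (fun h => hk h.symm), mul_assoc, ih hjt, mul_zero]

end IdemAux
namespace IdemAux
open CliffordAlgebra

def Dd (n : ℕ) (j : Fin n) : Module.Dual ℂ (Fin (2*n) → ℂ) :=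
  -(LinearMap.proj (⟨j.val, by have := j.isLt; omega⟩ : Fin (2*n)))
    + Complex.I • LinearMap.proj (⟨n + j.val, by have := j.isLt; omega⟩ : Fin (2*n))

def Ed (n : ℕ) (j : Fin n) : Module.Dual ℂ (Fin (2*n) → ℂ) :=
  LinearMap.proj (⟨j.val, by have := j.isLt; omega⟩ : Fin (2*n))
    + Complex.I • LinearMap.proj (⟨n + j.val, by have := j.isLt; omega⟩ : Fin (2*n))

lemma Dd_va (n : ℕ) (j k : Fin n) : Dd n j (va n k) = 0 := by
  have h1 : j.val ≠ n + k.val := by have := j.isLt; omega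
  have h2 : n + j.val ≠ k.val := by have := k.isLt; omega
  have h0 : ¬ (n = 0) := by have := j.isLt; omega
  by_cases h : j.val = k.val
  · simp [Dd, va, s1, s2, Pi.single_apply, Fin.ext_iff, h1, h2, h, h0]
    first
    | (ring_nf; simp [Complex.I_sq]; try ring)
    | skip
  · simp [Dd, va, s1, s2, Pi.single_apply, Fin.ext_iff, h1, h2, h]

lemma Ed_vb (n : ℕ) (j k : Fin n) : Ed n j (vb n k) = 0 := by
  have h1 : j.val ≠ n + k.val := by have := j.isLt; omega
  have h2 : n + j.val ≠ k.val := by have := k.isLt; omega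
  have h0 : ¬ (n = 0) := by have := j.isLt; omega
  by_cases h : j.val = k.val
  · simp [Ed, vb, s1, s2, Pi.single_apply, Fin.ext_iff, h1, h2, h, h0]
    first
    | (ring_nf; simp [Complex.I_sq]; try ring)
    | skip
  · simp [Ed, vb, s1, s2, Pi.single_apply, Fin.ext_iff, h1, h2, h]

lemma Dd_vb (n : ℕ) (j k : Fin n) : Dd n j (vb n k) = if j = k then 1 else 0 := by
  have h1 : j.val ≠ n + k.val := by have := j.isLt; omega
  have h2 : n + j.val ≠ k.val := by have := k.isLt; omega
  have h0 : ¬ (n = 0) := by have := j.isLt; omega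
  by_cases h : j = k
  · subst h
    simp [Dd, vb, s1, s2, Pi.single_apply, Fin.ext_iff, h1, h2, h0]
    first
    | (ring_nf; simp [Complex.I_sq]; try ring)
    | skip
  · have h' : j.val ≠ k.val := fun hh => h (Fin.ext hh)
    simp [Dd, vb, s1, s2, Pi.single_apply, Fin.ext_iff, h1, h2, h, h']

lemma Ed_va (n : ℕ) (j k : Fin n) : Ed n j (va n k) = if j = k then 1 else 0 := by
  have h1 : j.val ≠ n + k.val := by have := j.isLt; omega
  have h2 : n + j.val ≠ k.val := by have := k.isLt; omega
  have h0 : ¬ (n = 0) := by have := j.isLt; omega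
  by_cases h : j = k
  · subst h
    simp [Ed, va, s1, s2, Pi.single_apply, Fin.ext_iff, h1, h2, h0]
    first
    | (ring_nf; simp [Complex.I_sq]; try ring)
    | skip
  · have h' : j.val ≠ k.val := fun hh => h (Fin.ext hh)
    simp [Ed, va, s1, s2, Pi.single_apply, Fin.ext_iff, h1, h2, h, h']

lemma contract_prodP_zero (n : ℕ) (d : Module.Dual ℂ (Fin (2*n) → ℂ)) (l : List (Fin n))
    (hva : ∀ j ∈ l, d (va n j) = 0) (hvb : ∀ j ∈ l, d (vb n j) = 0) :
    contractLeft (Q := Qform (2*n)) d (prodP n l) = 0 := by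
  induction l with
  | nil => rw [prodP_nil]; exact contractLeft_one _ _
  | cons k t ih =>
      rw [prodP_cons, P, fw_eq, fwd_eq, mul_assoc, contractLeft_ι_mul,
        hva k (List.mem_cons_self (a := k) (l := t)), contractLeft_ι_mul,
        hvb k (List.mem_cons_self (a := k) (l := t)),
        ih (fun j hj => hva j (List.mem_cons_of_mem _ hj))
          (fun j hj => hvb j (List.mem_cons_of_mem _ hj))]
      simp

lemma step (n : ℕ) (j : Fin n) (t : List (Fin n)) (hj : j ∉ t) :
    contractLeft (Q := Qform (2*n)) (Ed n j)
      (contractLeft (Q := Qform (2*n)) (Dd n j) (prodP n (j :: t))) = -(prodP n t) := by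
  have hTD : contractLeft (Q := Qform (2*n)) (Dd n j) (prodP n t) = 0 :=
    contract_prodP_zero n _ t (fun k _ => Dd_va n j k)
      (fun k hk => by rw [Dd_vb, if_neg (fun h => hj (by rw [h]; exact hk))])
  have hTE : contractLeft (Q := Qform (2*n)) (Ed n j) (prodP n t) = 0 :=
    contract_prodP_zero n _ t
      (fun k hk => by rw [Ed_va, if_neg (fun h => hj (by rw [h]; exact hk))])
      (fun k _ => Ed_vb n j k)
  rw [prodP_cons, P, fw_eq, fwd_eq, mul_assoc, contractLeft_ι_mul, Dd_va,
    contractLeft_ι_mul, hTD, Dd_vb, if_pos rfl, one_smul, mul_zero, sub_zero, zero_smul,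
    zero_sub, map_neg, contractLeft_ι_mul, Ed_va, if_pos rfl, one_smul, hTE, mul_zero, sub_zero]

def chain (n : ℕ) : List (Fin n) → Cl (2*n) → Cl (2*n)
  | [], x => x
  | j :: t, x => chain n t
      (contractLeft (Q := Qform (2*n)) (Ed n j) (contractLeft (Q := Qform (2*n)) (Dd n j) x))

lemma chain_zero (n : ℕ) (l : List (Fin n)) : chain n l 0 = 0 := by
  induction l with
  | nil => rfl
  | cons j t ih => rw [chain, map_zero, map_zero, ih]

lemma chain_neg (n : ℕ) (l : List (Fin n)) (x : Cl (2*n)) : chain n l (-x) = -(chain n l x) := by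
  induction l generalizing x with
  | nil => rfl
  | cons j t ih => rw [chain, map_neg, map_neg, ih, chain]

lemma chain_prodP (n : ℕ) (l : List (Fin n)) (hl : l.Nodup) :
    chain n l (prodP n l) = ((-1 : ℂ) ^ l.length) • 1 := by
  induction l with
  | nil => simp [chain, prodP_nil]
  | cons j t ih =>
      have hj : j ∉ t := (List.nodup_cons.mp hl).1
      have ht : t.Nodup := (List.nodup_cons.mp hl).2
      rw [chain, step n j t hj, chain_neg, ih ht, List.length_cons, pow_succ]
      rw [← neg_smul]
      ring_nf

lemma prodP_ne_zero (n : ℕ) (l : List (Fin n)) (hl : l.Nodup) : prodP n l ≠ 0 := by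
  intro h
  have h2 := chain_prodP n l hl
  rw [h, chain_zero] at h2
  have : ((-1 : ℂ) ^ l.length) • (1 : Cl (2*n)) ≠ 0 :=
    smul_ne_zero (pow_ne_zero _ (by norm_num)) one_ne_zero
  exact this h2.symm

end IdemAux

/-- `I = f_1 f_1† ⋯ f_n f_n†` is a nonzero idempotent annihilated
on the left by every `f_j`. -/
theorem idem_properties (n : ℕ) (hn : 1 ≤ n) :
    idem n ≠ 0 ∧ idem n * idem n = idem n ∧ ∀ j : Fin n, fw n j * idem n = 0 := by
  have hidem : idem n = IdemAux.prodP n (List.finRange n) := by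
    rw [idem, List.ofFn_eq_map]; rfl
  have hnd := List.nodup_finRange n
  refine ⟨?_, ?_, ?_⟩
  · rw [hidem]; exact IdemAux.prodP_ne_zero n _ hnd
  · rw [hidem]; exact IdemAux.prodP_idem n _ hnd
  · intro j; rw [hidem]; exact IdemAux.fw_mul_prodP n j _ (List.mem_finRange j)
end
end

section
/- Let V be a complex vector space, P, Q : V → V linear maps with P∘P = 0, let s ≥ 1 be a natural number and v, w ∈ V. Define for k ≥ 0: A_k = ((−1)^k (s−1)!/(k!(s+k)!)) P((Q∘P)^k v), C_k = ((−1)^k (s−1)!/(k!(s−1+k)!)) (Q∘P)^k v, B_k = ((−1)^{k+1} s!/(k!(s+1+k)!)) P((Q∘P)^k w), and D_0 = w, D_k = ((−1)^k (s−1)!/(k!(s+k)!)) (s·(Q∘P)^k w − P((Q∘P)^k v)) for k ≥ 1. Then C_0 = v and for all k ≥ 0 the Class II recurrence relations hold: A_k = (1/(s+k)) P C_k, C_{k+1} = −(1/(k+1)) Q A_k, B_k = −(1/(s+1+k)) P(A_k + D_k), and A_{k+1} + D_{k+1} = (1/(k+1)) Q B_k. -/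
set_option maxHeartbeats 1600000 in
/-- The Class II recurrence relations of the h-submonogenic
system are solved by the explicit families
`A_k = ((−1)^k (s−1)!/(k!(s+k)!)) P((Q∘P)^k v)`,
`C_k = ((−1)^k (s−1)!/(k!(s−1+k)!)) (Q∘P)^k v`,
`B_k = ((−1)^{k+1} s!/(k!(s+1+k)!)) P((Q∘P)^k w)`,
`D_0 = w`, `D_k = ((−1)^k (s−1)!/(k!(s+k)!)) (s(Q∘P)^k w − P((Q∘P)^k v))` (k ≥ 1),
provided `P∘P = 0`. -/
theorem class_II_recurrence {V : Type*} [AddCommGroup V] [Module ℂ V]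
    (P Q : V →ₗ[ℂ] V) (hP : P ∘ₗ P = 0) (s : ℕ) (hs : 1 ≤ s) (v w : V)
    (A B C D : ℕ → V)
    (hA : ∀ k, A k = (((-1 : ℂ) ^ k * ((s - 1).factorial : ℂ)) /
      ((k.factorial : ℂ) * ((s + k).factorial : ℂ))) • P (((Q ∘ₗ P) ^ k) v))
    (hC : ∀ k, C k = (((-1 : ℂ) ^ k * ((s - 1).factorial : ℂ)) /
      ((k.factorial : ℂ) * ((s - 1 + k).factorial : ℂ))) • ((Q ∘ₗ P) ^ k) v)
    (hB : ∀ k, B k = (((-1 : ℂ) ^ (k + 1) * (s.factorial : ℂ)) /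
      ((k.factorial : ℂ) * ((s + 1 + k).factorial : ℂ))) • P (((Q ∘ₗ P) ^ k) w))
    (hD0 : D 0 = w)
    (hD : ∀ k, 1 ≤ k → D k = (((-1 : ℂ) ^ k * ((s - 1).factorial : ℂ)) /
      ((k.factorial : ℂ) * ((s + k).factorial : ℂ))) •
        ((s : ℂ) • ((Q ∘ₗ P) ^ k) w - P (((Q ∘ₗ P) ^ k) v))) :
    C 0 = v ∧
    (∀ k, A k = (((s : ℂ) + k)⁻¹) • P (C k)) ∧
    (∀ k, C (k + 1) = -(((k : ℂ) + 1)⁻¹) • Q (A k)) ∧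
    (∀ k, B k = -(((s : ℂ) + 1 + k)⁻¹) • P (A k + D k)) ∧
    (∀ k, A (k + 1) + D (k + 1) = (((k : ℂ) + 1)⁻¹) • Q (B k)) := by
  obtain ⟨t, rfl⟩ : ∃ t, s = t + 1 := ⟨s - 1, (Nat.succ_pred_eq_of_pos hs).symm⟩
  have hPP : ∀ x : V, P (P x) = 0 := fun x => by
    simpa using LinearMap.congr_fun hP x
  have hfac : ∀ n : ℕ, ((n.factorial : ℂ)) ≠ 0 := fun n =>
    Nat.cast_ne_zero.mpr n.factorial_ne_zero
  have hnat : ∀ n : ℕ, ((n : ℂ) + 1) ≠ 0 := fun n h => by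
    exact Nat.succ_ne_zero n (by exact_mod_cast h)
  have hsub : t + 1 - 1 = t := by omega
  have hQP : ∀ (k : ℕ) (x : V), Q (P (((Q ∘ₗ P) ^ k) x)) = ((Q ∘ₗ P) ^ (k + 1)) x := by
    intro k x
    rw [pow_succ']
    simp [Module.End.mul_eq_comp]
  simp only [hsub] at hA hC hD
  refine ⟨?_, ?_, ?_, ?_, ?_⟩
  · rw [hC]
    simp [div_self (hfac t)]
  · intro k
    rw [hA, hC, map_smul, smul_smul]
    congr 1
    rw [show t + 1 + k = (t + k) + 1 from by ring, Nat.factorial_succ (t + k)]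
    have h2 := hnat (t + k); push_cast at h2
    push_cast
    field_simp
    rw [show (t : ℂ) + 1 + k = t + k + 1 by ring]
    exact (mul_div_mul_right _ _ h2).symm
  · intro k
    rw [hC, hA, map_smul, hQP, smul_smul]
    congr 1
    rw [show t + (k + 1) = (t + k) + 1 from by ring,
      show t + 1 + k = (t + k) + 1 from by ring, Nat.factorial_succ (t + k),
      Nat.factorial_succ k]
    have h2 := hnat k; push_cast at h2
    push_cast
    field_simp
    ring
  · intro k
    rcases Nat.eq_zero_or_pos k with rfl | hk
    · rw [hB, hA, hD0]
      simp only [map_add, map_smul, hPP, smul_zero, zero_add, pow_zero,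
        Module.End.one_apply]
      congr 1
      rw [show t + 1 + 1 + 0 = (t + 1) + 1 from by ring, Nat.factorial_succ (t + 1),
        Nat.factorial_zero]
      have h2 := hnat (t + 1); push_cast at h2
      push_cast
      rw [div_eq_iff (by simp [hfac (t + 1), h2])]
      field_simp
      rw [add_zero, mul_div_cancel_right₀ _ h2]
    · rw [hB, hA, hD k hk]
      simp only [map_add, map_smul, map_sub, hPP, smul_zero, zero_add, sub_zero,
        smul_smul]
      congr 1
      rw [show t + 1 + 1 + k = (t + 1 + k) + 1 from by ring, Nat.factorial_succ (t + 1 + k),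
        show t + 1 + k = (t + k) + 1 from by ring, Nat.factorial_succ (t + k),
        Nat.factorial_succ t]
      have h2 := hnat (t + 1 + k); push_cast at h2
      have h3 := hnat (t + k); push_cast at h3
      push_cast
      field_simp
      ring
  · intro k
    rw [hA, hD (k + 1) (Nat.le_add_left 1 k), hB]
    simp only [map_smul, hQP, smul_sub, smul_smul]
    rw [show ∀ (a b : V), a + (b - a) = b from fun a b => by abel]
    congr 1
    rw [show t + 1 + (k + 1) = (t + 1 + k) + 1 from by ring,
      show t + 1 + 1 + k = (t + 1 + k) + 1 from by ring, Nat.factorial_succ (t + 1 + k),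
      Nat.factorial_succ k, Nat.factorial_succ t]
    have h2 := hnat k; push_cast at h2
    have h3 := hnat (t + 1 + k); push_cast at h3
    push_cast
    field_simp
end

section
/- Let V be a complex vector space, P, Q : V → V linear maps, and let (a_ℓ)_{ℓ≥0} and (c_k)_{k≥0} be families in V. Define doubly indexed families: A_{k,ℓ} = ((−1)^k (ℓ−k)!/(k! ℓ!)) (P∘Q)^k a_{ℓ−k} whenever 0 ≤ k ≤ ℓ; A_{k,ℓ} = ((−1)^ℓ (k−1−ℓ)!/(k! ℓ!)) P((Q∘P)^ℓ c_{k−1−ℓ}) whenever 0 ≤ ℓ < k; C_{k,ℓ} = ((−1)^ℓ (k−ℓ)!/(k! ℓ!)) (Q∘P)^ℓ c_{k−ℓ} whenever 0 ≤ ℓ ≤ k; and C_{k,ℓ} = ((−1)^{k+1} (ℓ−1−k)!/(k! ℓ!)) Q((P∘Q)^k a_{ℓ−1−k}) whenever 0 ≤ k < ℓ. Then A_{0,ℓ} = a_ℓ, C_{k,0} = c_k, and for all k, ℓ ≥ 0 the double power series recurrence relations hold: A_{k+1,ℓ} = (1/(k+1)) P C_{k,ℓ} and C_{k,ℓ+1}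 = −(1/(ℓ+1)) Q A_{k,ℓ}. -/
/-- The double power series recurrence
`A_{k+1,ℓ} = P C_{k,ℓ}/(k+1)`, `C_{k,ℓ+1} = −Q A_{k,ℓ}/(ℓ+1)` of the
h-submonogenic system is solved by
`A_{k,ℓ} = ((−1)^k (ℓ−k)!/(k!ℓ!)) (P∘Q)^k a_{ℓ−k}` for `k ≤ ℓ`,
`A_{k,ℓ} = ((−1)^ℓ (k−1−ℓ)!/(k!ℓ!)) P((Q∘P)^ℓ c_{k−1−ℓ})` for `ℓ < k`,
`C_{k,ℓ} = ((−1)^ℓ (k−ℓ)!/(k!ℓ!)) (Q∘P)^ℓ c_{k−ℓ}` for `ℓ ≤ k`,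
`C_{k,ℓ} = ((−1)^{k+1} (ℓ−1−k)!/(k!ℓ!)) Q((P∘Q)^k a_{ℓ−1−k})` for `k < ℓ`,
with `A_{0,ℓ} = a_ℓ` and `C_{k,0} = c_k`. -/
theorem double_power_series_recurrence {V : Type*} [AddCommGroup V] [Module ℂ V]
    (P Q : V →ₗ[ℂ] V) (a c : ℕ → V)
    (A C : ℕ → ℕ → V)
    (hA1 : ∀ k l, k ≤ l → A k l = (((-1 : ℂ) ^ k * ((l - k).factorial : ℂ)) /
      ((k.factorial : ℂ) * (l.factorial : ℂ))) • ((P ∘ₗ Q) ^ k) (a (l - k)))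
    (hA2 : ∀ k l, l < k → A k l = (((-1 : ℂ) ^ l * ((k - 1 - l).factorial : ℂ)) /
      ((k.factorial : ℂ) * (l.factorial : ℂ))) • P (((Q ∘ₗ P) ^ l) (c (k - 1 - l))))
    (hC1 : ∀ k l, l ≤ k → C k l = (((-1 : ℂ) ^ l * ((k - l).factorial : ℂ)) /
      ((k.factorial : ℂ) * (l.factorial : ℂ))) • ((Q ∘ₗ P) ^ l) (c (k - l)))
    (hC2 : ∀ k l, k < l → C k l = (((-1 : ℂ) ^ (k + 1) * ((l - 1 - k).factorial : ℂ)) /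
      ((k.factorial : ℂ) * (l.factorial : ℂ))) • Q (((P ∘ₗ Q) ^ k) (a (l - 1 - k)))) :
    (∀ l, A 0 l = a l) ∧ (∀ k, C k 0 = c k) ∧
    (∀ k l, A (k + 1) l = (((k : ℂ) + 1)⁻¹) • P (C k l)) ∧
    (∀ k l, C k (l + 1) = -(((l : ℂ) + 1)⁻¹) • Q (A k l)) := by
  have hfk : ∀ n : ℕ, ((n.factorial : ℂ)) ≠ 0 := fun n => by
    exact_mod_cast Nat.cast_ne_zero.mpr n.factorial_ne_zero
  refine ⟨?_, ?_, ?_, ?_⟩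
  · intro l
    rw [hA1 0 l (Nat.zero_le l)]
    simp [div_self (hfk l)]
  · intro k
    rw [hC1 k 0 (Nat.zero_le k)]
    simp [div_self (hfk k)]
  · intro k l
    rcases le_or_gt l k with hl | hl
    · rw [hA2 (k+1) l (by omega), hC1 k l hl]
      have he : k + 1 - 1 - l = k - l := by omega
      rw [he, map_smul, smul_smul]
      congr 1
      rw [Nat.factorial_succ]
      push_cast
      have h3 : (k : ℂ) + 1 ≠ 0 := Nat.cast_add_one_ne_zero k
      field_simp
    · rw [hA1 (k+1) l (by omega), hC2 k l hl]
      have he : l - (k + 1) = l - 1 - k := by omega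
      rw [he, pow_succ' (P ∘ₗ Q) k]
      rw [map_smul, smul_smul]
      simp only [Module.End.mul_apply, LinearMap.comp_apply]
      congr 1
      rw [Nat.factorial_succ]
      push_cast
      have h3 : (k : ℂ) + 1 ≠ 0 := Nat.cast_add_one_ne_zero k
      field_simp
  · intro k l
    rcases le_or_gt k l with hl | hl
    · rw [hC2 k (l+1) (by omega), hA1 k l hl]
      have he : l + 1 - 1 - k = l - k := by omega
      rw [he, map_smul, smul_smul]
      congr 1
      rw [Nat.factorial_succ]
      push_cast
      have h3 : (l : ℂ) + 1 ≠ 0 := Nat.cast_add_one_ne_zero l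
      field_simp
      ring
    · rw [hC1 k (l+1) (by omega), hA2 k l hl]
      have he : k - (l + 1) = k - 1 - l := by omega
      rw [he, pow_succ' (Q ∘ₗ P) l]
      rw [map_smul, smul_smul]
      simp only [Module.End.mul_apply, LinearMap.comp_apply]
      congr 1
      rw [Nat.factorial_succ]
      push_cast
      have h3 : (l : ℂ) + 1 ≠ 0 := Nat.cast_add_one_ne_zero l
      field_simp
      ring
end

section
/- Let c : ℝ → ℂ be a differentiable function, and define F : ℝ^{2n} → 𝒞 by F(x,y) = c(|z|²)·𝐳(z), where z_j = x_j + i y_j, |z|² = Σ_{j=1}^n (x_j² + y_j²), and 𝐳(z) = Σ_{j=1}^n z_j f_j. Then F is differentiable and at every point ∂_z F = c(|z|²)·β + c′(|z|²)·𝐳†(z)𝐳(z), where β = Σ_{j=1}^n f_j† f_j and 𝐳†(z) = Σ_{j=1}^n conj(z_j) f_j†. -/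
noncomputable section

/-- The domain `ℝ^{2n}`, with coordinates written `(x_1,…,x_n,y_1,…,y_n)`. -/
abbrev Dom (n : ℕ) : Type := (Fin n → ℝ) × (Fin n → ℝ)

/-- The coordinate direction `x_j`. -/
def ex (n : ℕ) (j : Fin n) : Dom n := (Pi.single j 1, 0)

/-- The coordinate direction `y_j`. -/
def ey (n : ℕ) (j : Fin n) : Dom n := (0, Pi.single j 1)

/-- The complex coordinates `z_j = x_j + i y_j` of a point. -/
def zc (n : ℕ) (pt : Dom n) : Fin n → ℂ := fun j => (pt.1 j : ℂ) + Complex.I * (pt.2 j : ℂ)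

/-- `ν = |z|² = ∑ (x_j² + y_j²)`. -/
def nu (n : ℕ) (pt : Dom n) : ℝ := ∑ j, ((pt.1 j) ^ 2 + (pt.2 j) ^ 2)

/-- `g' pt v` is the directional (line) derivative of the Clifford-algebra valued
function `g` at `pt` in the direction `v`, tested against all `ℂ`-linear
functionals (an equivalent description of differentiability, as the Clifford
algebra is a finite-dimensional complex vector space). -/
def IsWeakLineDeriv (n : ℕ) (g : Dom n → Cl (2 * n))
    (g' : Dom n → Dom n → Cl (2 * n)) : Prop :=
  ∀ φ : Module.Dual ℂ (Cl (2 * n)), ∀ pt v,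
    HasLineDerivAt ℝ (fun q => φ (g q)) (φ (g' pt v)) pt v

/-- The Hermitian Dirac operator `∂_z F = ∑_j f_j† (1/2)(∂_{x_j} F − i ∂_{y_j} F)`
expressed through the (directional) derivative `F'` of `F`. -/
def DzOf (n : ℕ) (F' : Dom n → Dom n → Cl (2 * n)) (pt : Dom n) : Cl (2 * n) :=
  ∑ j, fwd n j * ((2⁻¹ : ℂ) • (F' pt (ex n j) - Complex.I • F' pt (ey n j)))

/-- The Hermitian Dirac operator `∂_z† F = ∑_j f_j (1/2)(∂_{x_j} F + i ∂_{y_j} F)`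
expressed through the (directional) derivative `F'` of `F`. -/
def DzdOf (n : ℕ) (F' : Dom n → Dom n → Cl (2 * n)) (pt : Dom n) : Cl (2 * n) :=
  ∑ j, fw n j * ((2⁻¹ : ℂ) • (F' pt (ex n j) + Complex.I • F' pt (ey n j)))


lemma zvec_add (n : ℕ) (z w : Fin n → ℂ) : zvec n (z + w) = zvec n z + zvec n w := by
  simp [zvec, add_smul, Finset.sum_add_distrib]

lemma zvec_smul (n : ℕ) (a : ℂ) (z : Fin n → ℂ) : zvec n (a • z) = a • zvec n z := by
  simp [zvec, Finset.smul_sum, smul_smul]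

lemma zc_add_smul (n : ℕ) (pt v : Dom n) (t : ℝ) :
    zc n (pt + t • v) = zc n pt + (t : ℂ) • zc n v := by
  funext j
  simp only [zc, Prod.fst_add, Prod.snd_add, Prod.smul_fst, Prod.smul_snd, Pi.add_apply,
    Pi.smul_apply, smul_eq_mul, Pi.smul_apply]
  push_cast
  ring

lemma nu_add_smul (n : ℕ) (pt v : Dom n) (t : ℝ) :
    nu n (pt + t • v) = nu n pt + 2 * (∑ j, (pt.1 j * v.1 j + pt.2 j * v.2 j)) * t
      + nu n v * t ^ 2 := by
  unfold nu
  have h : ∀ j : Fin n, ((pt + t • v).1 j) ^ 2 + ((pt + t • v).2 j) ^ 2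
      = (pt.1 j ^ 2 + pt.2 j ^ 2) + 2 * (pt.1 j * v.1 j + pt.2 j * v.2 j) * t
        + (v.1 j ^ 2 + v.2 j ^ 2) * t ^ 2 := by
    intro j
    simp only [Prod.fst_add, Prod.snd_add, Prod.smul_fst, Prod.smul_snd, Pi.add_apply,
      Pi.smul_apply, smul_eq_mul]
    ring
  simp only [h]
  rw [Finset.sum_add_distrib, Finset.sum_add_distrib, ← Finset.sum_mul, ← Finset.sum_mul,
    ← Finset.mul_sum]

lemma zvec_single (n : ℕ) (j : Fin n) (a : ℂ) : zvec n (Pi.single j a) = a • fw n j := by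
  unfold zvec
  rw [Finset.sum_eq_single j]
  · simp
  · intro k _ hk; simp [Pi.single_apply, hk]
  · simp

lemma zc_ex (n : ℕ) (j : Fin n) : zc n (ex n j) = Pi.single j 1 := by
  funext k
  by_cases h : k = j <;> simp [zc, ex, Pi.single_apply, h]

lemma zc_ey (n : ℕ) (j : Fin n) : zc n (ey n j) = Pi.single j Complex.I := by
  funext k
  by_cases h : k = j <;> simp [zc, ey, Pi.single_apply, h]

lemma B_ex (n : ℕ) (pt : Dom n) (j : Fin n) :
    (∑ k, (pt.1 k * (ex n j).1 k + pt.2 k * (ex n j).2 k)) = pt.1 j := by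
  simp [ex, Pi.single_apply, mul_ite, Finset.sum_ite_eq']

lemma B_ey (n : ℕ) (pt : Dom n) (j : Fin n) :
    (∑ k, (pt.1 k * (ey n j).1 k + pt.2 k * (ey n j).2 k)) = pt.2 j := by
  simp [ey, Pi.single_apply, mul_ite, Finset.sum_ite_eq']

lemma conj_zc (n : ℕ) (pt : Dom n) (j : Fin n) :
    (starRingEnd ℂ) (zc n pt j) = (pt.1 j : ℂ) - Complex.I * pt.2 j := by
  simp [zc, Complex.conj_ofReal]
  ring

lemma key_half (n : ℕ) (Z f : Cl (2 * n)) (a₁ a₂ b : ℂ) :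
    (2⁻¹ : ℂ) • ((a₁ • Z + b • f) - Complex.I • (a₂ • Z + b • (Complex.I • f)))
      = (2⁻¹ * (a₁ - Complex.I * a₂)) • Z + b • f := by
  have h : Complex.I * (Complex.I * b) = -b := by
    have := Complex.I_mul_I
    linear_combination b * this
  rw [smul_add Complex.I, smul_smul Complex.I, smul_smul b, mul_comm b, smul_smul Complex.I, h]
  module

/-- For differentiable `c : ℝ → ℂ` and `F = c(|z|²)·𝐳`, the
function `F` is differentiable and `∂_z F = c(|z|²)·β + c′(|z|²)·𝐳†𝐳`. -/
theorem Dz_of_c_zvec (n : ℕ) (hn : 1 ≤ n) (c : ℝ → ℂ) (hc : Differentiable ℝ c)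
    (F : Dom n → Cl (2 * n)) (hF : ∀ pt, F pt = c (nu n pt) • zvec n (zc n pt)) :
    ∃ F' : Dom n → Dom n → Cl (2 * n), IsWeakLineDeriv n F F' ∧
      ∀ pt, DzOf n F' pt =
        c (nu n pt) • beta n +
          deriv c (nu n pt) • (zvecd n (zc n pt) * zvec n (zc n pt)) := by
  classical
  refine ⟨fun pt v =>
    (deriv c (nu n pt) * ((2 * ∑ j, (pt.1 j * v.1 j + pt.2 j * v.2 j) : ℝ) : ℂ))
      • zvec n (zc n pt) + c (nu n pt) • zvec n (zc n v), ?_, ?_⟩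
  · -- differentiability
    intro φ pt v
    set A := nu n pt with hA
    set B := (∑ j, (pt.1 j * v.1 j + pt.2 j * v.2 j) : ℝ) with hB
    set C := nu n v with hC
    set zφ := φ (zvec n (zc n pt)) with hz
    set wφ := φ (zvec n (zc n v)) with hw
    have hfun : (fun t : ℝ => φ (F (pt + t • v)))
        = fun t : ℝ => c (A + 2 * B * t + C * t ^ 2) * (zφ + (t : ℂ) * wφ) := by
      funext t
      rw [hF, nu_add_smul, zc_add_smul, zvec_add, zvec_smul, map_smul, map_add, map_smul]
      simp [smul_eq_mul]
      rfl
    show HasDerivAt (fun t : ℝ => φ (F (pt + t • v))) _ 0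
    rw [hfun]
    have hq : HasDerivAt (fun t : ℝ => A + 2 * B * t + C * t ^ 2) (2 * B) 0 := by
      have h1 : HasDerivAt (fun t : ℝ => A + 2 * B * t) (2 * B) 0 := by
        simpa using ((hasDerivAt_id (0 : ℝ)).const_mul (2 * B)).const_add A
      have h2 : HasDerivAt (fun t : ℝ => C * t ^ 2) 0 0 := by
        simpa using (hasDerivAt_pow 2 (0 : ℝ)).const_mul C
      have h3 : HasDerivAt (fun t : ℝ => A + 2 * B * t + C * t ^ 2) (2 * B + 0) 0 := h1.add h2
      simpa using h3
    have hcq : HasDerivAt (fun t : ℝ => c (A + 2 * B * t + C * t ^ 2))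
        ((2 * B) • deriv c (A + 2 * B * 0 + C * 0 ^ 2)) 0 :=
      ((hc _).hasDerivAt).scomp 0 hq
    have hlin : HasDerivAt (fun t : ℝ => zφ + (t : ℂ) * wφ) wφ 0 := by
      have : HasDerivAt (fun t : ℝ => (t : ℂ)) 1 0 := by
        simpa using (hasDerivAt_id (0 : ℝ)).ofReal_comp
      simpa using (this.mul_const wφ).const_add zφ
    have := hcq.mul hlin
    have h0 : A + 2 * B * 0 + C * 0 ^ 2 = A := by ring
    rw [h0] at this
    refine this.congr_deriv ?_
    rw [map_add, map_smul, map_smul, ← hB, Complex.real_smul]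
    push_cast
    simp only [smul_eq_mul, ← hz, ← hw, ← hA]
    ring
  · -- the formula
    intro pt
    set A := nu n pt with hA
    set Z := zvec n (zc n pt) with hZ
    have hterm : ∀ j : Fin n,
        fwd n j * ((2⁻¹ : ℂ) • ((deriv c A * ((2 * ∑ k, (pt.1 k * (ex n j).1 k + pt.2 k * (ex n j).2 k) : ℝ) : ℂ)) • Z + c A • zvec n (zc n (ex n j))
          - Complex.I • ((deriv c A * ((2 * ∑ k, (pt.1 k * (ey n j).1 k + pt.2 k * (ey n j).2 k) : ℝ) : ℂ)) • Z + c A • zvec n (zc n (ey n j)))))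
        = (deriv c A * (starRingEnd ℂ) (zc n pt j)) • (fwd n j * Z)
          + c A • (fwd n j * fw n j) := by
      intro j
      rw [B_ex, B_ey, zc_ex, zc_ey, zvec_single, zvec_single, one_smul]
      rw [key_half n Z (fw n j) _ _ (c A)]
      rw [mul_add, mul_smul_comm, mul_smul_comm]
      congr 2
      rw [conj_zc]
      push_cast
      ring
    have h1 : ∑ j, (deriv c A * (starRingEnd ℂ) (zc n pt j)) • (fwd n j * Z)
        = deriv c A • (zvecd n (zc n pt) * Z) := by
      rw [zvecd, Finset.sum_mul, Finset.smul_sum]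
      exact Finset.sum_congr rfl fun j _ => by rw [smul_mul_assoc, smul_smul]
    have h2 : ∑ j : Fin n, c A • (fwd n j * fw n j) = c A • beta n := by
      rw [beta, Finset.smul_sum]
    unfold DzOf
    rw [Finset.sum_congr rfl fun j _ => hterm j, Finset.sum_add_distrib, h1, h2]
    exact add_comm _ _
end
end

section
/- Let n ≥ 1 be a natural number, λ, μ nonzero real numbers, and ℓ ∈ ℂ. Let c : ℝ → ℂ be twice differentiable and define a₁ = (ℓ/λ)·c and a₂ = (1/λ)·c′. If for all ν ∈ ℝ one has a₁′(ν) + ν·a₂′(ν) + μ·c(ν) = (ℓ − n − 1)·a₂(ν), then c satisfies the Bessel-type ordinary differential equation ν·c″(ν) + (n+1)·c′(ν) + λμ·c(ν) = 0 for all ν ∈ ℝ. -/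
/-- The exponential-type ansatz reduction: if `a₁ = (ℓ/λ)c`,
`a₂ = (1/λ)c′` satisfy `a₁′(ν) + ν a₂′(ν) + μ c(ν) = (ℓ − n − 1) a₂(ν)` for all
`ν`, then `c` satisfies the Bessel-type ODE `ν c″ + (n+1) c′ + λμ c = 0`. -/
theorem exponential_ansatz_bessel_ode (n : ℕ) (hn : 1 ≤ n)
    (lam mu : ℝ) (hlam : lam ≠ 0) (hmu : mu ≠ 0) (l : ℂ)
    (c : ℝ → ℂ) (hc : Differentiable ℝ c) (hc' : Differentiable ℝ (deriv c))
    (a₁ a₂ : ℝ → ℂ)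
    (ha₁ : ∀ ν, a₁ ν = (l / (lam : ℂ)) * c ν)
    (ha₂ : ∀ ν, a₂ ν = (1 / (lam : ℂ)) * deriv c ν)
    (h : ∀ ν : ℝ, deriv a₁ ν + (ν : ℂ) * deriv a₂ ν + (mu : ℂ) * c ν =
      (l - (n : ℂ) - 1) * a₂ ν) :
    ∀ ν : ℝ, (ν : ℂ) * deriv (deriv c) ν + ((n : ℂ) + 1) * deriv c ν +
      ((lam : ℂ) * (mu : ℂ)) * c ν = 0 := by
  intro ν
  have hA1 : a₁ = fun ν => (l / (lam : ℂ)) * c ν := funext ha₁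
  have hA2 : a₂ = fun ν => (1 / (lam : ℂ)) * deriv c ν := funext ha₂
  have d1 : deriv a₁ ν = (l / (lam : ℂ)) * deriv c ν := by
    rw [hA1, deriv_const_mul _ (hc ν)]
  have d2 : deriv a₂ ν = (1 / (lam : ℂ)) * deriv (deriv c) ν := by
    rw [hA2, deriv_const_mul _ (hc' ν)]
  have hlamC : (lam : ℂ) ≠ 0 := by exact_mod_cast hlam
  have heq := h ν
  rw [d1, d2, ha₂] at heq
  field_simp at heq
  linear_combination heq
end

section
/- Let n ≥ 1 and p ≥ 0 be natural numbers and let G : ℝ^{2n} → ℝ be the Gaussian G(x,y) = exp(−(1/2)Σ_{j=1}^n (x_j² + y_j²)). Then, with Δ = Σ_{j=1}^n (∂²_{x_j} + ∂²_{y_j}) applied p times, the Rodrigues-type formula holds at every point: ∂_z†(Δ^p G) = −(1/2)(−2)^p p! · L_p^{(n)}(|z|²/2) · 𝐳(z) · G(x,y), where z_j = x_j + i y_j, |z|² = Σ_{j=1}^n (x_j²+y_j²), 𝐳(z) = Σ_{j=1}^n z_j f_j, and L_p^{(n)} is the generalized Laguerre polynomial. (In the paper's notation this says H^{(1)}_{2p+1}(𝐳,𝐳†)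 = (−1)^{p−1} 2^{p−1} p! 𝐳 L_p^n(|𝐳|²/2), where H^{(1)}_{2p+1}(𝐳,𝐳†) e^{−|𝐳|²/2} = ∂_{𝐳†} Δ^p e^{−|𝐳|²/2}.) -/
noncomputable section

/-- The partial derivative `∂_{x_j}`. -/
def pdx {E : Type*} [NormedAddCommGroup E] [NormedSpace ℝ E] (n : ℕ) (j : Fin n)
    (f : Dom n → E) : Dom n → E := fun pt => fderiv ℝ f pt (ex n j)

/-- The partial derivative `∂_{y_j}`. -/
def pdy {E : Type*} [NormedAddCommGroup E] [NormedSpace ℝ E] (n : ℕ) (j : Fin n)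
    (f : Dom n → E) : Dom n → E := fun pt => fderiv ℝ f pt (ey n j)

/-- The Laplacian `Δ = ∑_j (∂²_{x_j} + ∂²_{y_j})` on scalar functions. -/
def Lap (n : ℕ) (f : Dom n → ℝ) : Dom n → ℝ :=
  fun pt => ∑ j, (pdx n j (pdx n j f) pt + pdy n j (pdy n j f) pt)

/-- The Hermitian Dirac operator `∂_z† g = ∑_j f_j (1/2)(∂_{x_j} g + i ∂_{y_j} g)`
applied to a scalar-valued function `g`. -/
def DzdScalar (n : ℕ) (g : Dom n → ℂ) (pt : Dom n) : Cl (2 * n) :=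
  ∑ j, ((2⁻¹ : ℂ) * (pdx n j g pt + Complex.I * pdy n j g pt)) • fw n j

/-- The generalized Laguerre polynomial `L_p^{(α)}(x) = ∑_{k=0}^p (−1)^k C(p+α, p−k) x^k/k!`. -/
def Laguerre (p α : ℕ) (x : ℂ) : ℂ :=
  ∑ k ∈ Finset.range (p + 1),
    (-1 : ℂ) ^ k * ((p + α).choose (p - k) : ℂ) * x ^ k / (k.factorial : ℂ)

/-- The Gaussian `G(x,y) = exp(−(1/2)∑(x_j² + y_j²))`. -/
def Gauss (n : ℕ) : Dom n → ℝ := fun pt => Real.exp (-(1 / 2) * nu n pt)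

/-! ### Auxiliary machinery for the proof -/

/-- Coordinate continuous linear map `x_j`. -/
def Xc (n : ℕ) (j : Fin n) : Dom n →L[ℝ] ℝ :=
  (ContinuousLinearMap.proj j).comp (ContinuousLinearMap.fst ℝ (Fin n → ℝ) (Fin n → ℝ))

/-- Coordinate continuous linear map `y_j`. -/
def Yc (n : ℕ) (j : Fin n) : Dom n →L[ℝ] ℝ :=
  (ContinuousLinearMap.proj j).comp (ContinuousLinearMap.snd ℝ (Fin n → ℝ) (Fin n → ℝ))

@[simp] lemma Xc_apply (n : ℕ) (j : Fin n) (v : Dom n) : Xc n j v = v.1 j := rfl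
@[simp] lemma Yc_apply (n : ℕ) (j : Fin n) (v : Dom n) : Yc n j v = v.2 j := rfl

/-- The derivative of `nu`. -/
def nuL (n : ℕ) (pt : Dom n) : Dom n →L[ℝ] ℝ :=
  ∑ j, ((2 * pt.1 j) • Xc n j + (2 * pt.2 j) • Yc n j)

lemma hasFDerivAt_nu (n : ℕ) (pt : Dom n) : HasFDerivAt (nu n) (nuL n pt) pt := by
  have : HasFDerivAt (fun q : Dom n => ∑ j, ((q.1 j) ^ 2 + (q.2 j) ^ 2)) (nuL n pt) pt := by
    unfold nuL
    apply HasFDerivAt.fun_sum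
    intro j _
    have hx : HasFDerivAt (fun q : Dom n => (q.1 j) ^ 2) ((2 * pt.1 j) • Xc n j) pt := by
      have : HasFDerivAt (fun q : Dom n => q.1 j * q.1 j) _ pt :=
        ((Xc n j).hasFDerivAt (x := pt)).mul ((Xc n j).hasFDerivAt (x := pt))
      simp only [Xc_apply] at this
      have h2 : (fun q : Dom n => (q.1 j) ^ 2) = fun q : Dom n => q.1 j * q.1 j := by
        funext q; ring
      rw [h2]
      refine this.congr_fderiv ?_
      module
    have hy : HasFDerivAt (fun q : Dom n => (q.2 j) ^ 2) ((2 * pt.2 j) • Yc n j) pt := by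
      have : HasFDerivAt (fun q : Dom n => q.2 j * q.2 j) _ pt :=
        ((Yc n j).hasFDerivAt (x := pt)).mul ((Yc n j).hasFDerivAt (x := pt))
      simp only [Yc_apply] at this
      have h2 : (fun q : Dom n => (q.2 j) ^ 2) = fun q : Dom n => q.2 j * q.2 j := by
        funext q; ring
      rw [h2]
      refine this.congr_fderiv ?_
      module
    exact hx.add hy
  exact this

lemma nuL_ex (n : ℕ) (pt : Dom n) (j : Fin n) : nuL n pt (ex n j) = 2 * pt.1 j := by
  simp [nuL, ex, ContinuousLinearMap.sum_apply, Pi.single_apply]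

lemma nuL_ey (n : ℕ) (pt : Dom n) (j : Fin n) : nuL n pt (ey n j) = 2 * pt.2 j := by
  simp [nuL, ey, ContinuousLinearMap.sum_apply, Pi.single_apply]

lemma hasFDerivAt_comp_nu {n : ℕ} {F : ℝ → ℝ} {d : ℝ} {pt : Dom n}
    (hF : HasDerivAt F d (nu n pt)) :
    HasFDerivAt (fun q => F (nu n q)) (d • nuL n pt) pt :=
  hF.comp_hasFDerivAt pt (hasFDerivAt_nu n pt)

lemma pdx_comp_nu {n : ℕ} {F F' : ℝ → ℝ} (hF : ∀ t, HasDerivAt F (F' t) t) (j : Fin n) :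
    pdx n j (fun q => F (nu n q)) = fun pt => F' (nu n pt) * (2 * pt.1 j) := by
  funext pt
  have h := hasFDerivAt_comp_nu (n := n) (pt := pt) (hF (nu n pt))
  simp [pdx, h.fderiv, nuL_ex]

lemma pdy_comp_nu {n : ℕ} {F F' : ℝ → ℝ} (hF : ∀ t, HasDerivAt F (F' t) t) (j : Fin n) :
    pdy n j (fun q => F (nu n q)) = fun pt => F' (nu n pt) * (2 * pt.2 j) := by
  funext pt
  have h := hasFDerivAt_comp_nu (n := n) (pt := pt) (hF (nu n pt))
  simp [pdy, h.fderiv, nuL_ey]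

lemma pdx2_comp_nu {n : ℕ} {F F' F'' : ℝ → ℝ} (hF : ∀ t, HasDerivAt F (F' t) t)
    (hF' : ∀ t, HasDerivAt F' (F'' t) t) (j : Fin n) (pt : Dom n) :
    pdx n j (pdx n j (fun q => F (nu n q))) pt
      = 2 * F' (nu n pt) + (2 * pt.1 j) ^ 2 * F'' (nu n pt) := by
  rw [pdx_comp_nu hF j]
  have h1 : HasFDerivAt (fun q : Dom n => F' (nu n q)) (F'' (nu n pt) • nuL n pt) pt :=
    hasFDerivAt_comp_nu (hF' (nu n pt))
  have h2 : HasFDerivAt (fun q : Dom n => 2 * q.1 j) ((2:ℝ) • Xc n j) pt := by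
    simpa using ((Xc n j).hasFDerivAt (x := pt)).const_mul (2:ℝ)
  have h : HasFDerivAt (fun q : Dom n => F' (nu n q) * (2 * q.1 j)) _ pt := h1.mul h2
  simp only [pdx, h.fderiv, ContinuousLinearMap.add_apply, ContinuousLinearMap.smul_apply,
    nuL_ex, Xc_apply, smul_eq_mul]
  simp [ex]
  ring

lemma pdy2_comp_nu {n : ℕ} {F F' F'' : ℝ → ℝ} (hF : ∀ t, HasDerivAt F (F' t) t)
    (hF' : ∀ t, HasDerivAt F' (F'' t) t) (j : Fin n) (pt : Dom n) :
    pdy n j (pdy n j (fun q => F (nu n q))) pt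
      = 2 * F' (nu n pt) + (2 * pt.2 j) ^ 2 * F'' (nu n pt) := by
  rw [pdy_comp_nu hF j]
  have h1 : HasFDerivAt (fun q : Dom n => F' (nu n q)) (F'' (nu n pt) • nuL n pt) pt :=
    hasFDerivAt_comp_nu (hF' (nu n pt))
  have h2 : HasFDerivAt (fun q : Dom n => 2 * q.2 j) ((2:ℝ) • Yc n j) pt := by
    simpa using ((Yc n j).hasFDerivAt (x := pt)).const_mul (2:ℝ)
  have h : HasFDerivAt (fun q : Dom n => F' (nu n q) * (2 * q.2 j)) _ pt := h1.mul h2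
  simp only [pdy, h.fderiv, ContinuousLinearMap.add_apply, ContinuousLinearMap.smul_apply,
    nuL_ey, Yc_apply, smul_eq_mul]
  simp [ey]
  ring

lemma lap_comp {n : ℕ} {F F' F'' : ℝ → ℝ} (hF : ∀ t, HasDerivAt F (F' t) t)
    (hF' : ∀ t, HasDerivAt F' (F'' t) t) :
    Lap n (fun q => F (nu n q))
      = fun pt => 4 * nu n pt * F'' (nu n pt) + 4 * n * F' (nu n pt) := by
  funext pt
  unfold Lap
  have : ∀ j : Fin n, pdx n j (pdx n j (fun q => F (nu n q))) pt
      + pdy n j (pdy n j (fun q => F (nu n q))) pt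
      = 4 * F' (nu n pt) + 4 * ((pt.1 j)^2 + (pt.2 j)^2) * F'' (nu n pt) := by
    intro j
    rw [pdx2_comp_nu hF hF' j pt, pdy2_comp_nu hF hF' j pt]; ring
  rw [Finset.sum_congr rfl (fun j _ => this j)]
  rw [Finset.sum_add_distrib, Finset.sum_const, ← Finset.sum_mul, ← Finset.mul_sum]
  simp [nu]
  ring

lemma dzd_comp {n : ℕ} {F F' : ℝ → ℝ} (hF : ∀ t, HasDerivAt F (F' t) t) (pt : Dom n) :
    DzdScalar n (fun q => ((F (nu n q) : ℝ) : ℂ)) pt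
      = ((F' (nu n pt) : ℝ) : ℂ) • zvec n (zc n pt) := by
  have hcr : HasFDerivAt (fun q : Dom n => ((F (nu n q) : ℝ) : ℂ))
      (Complex.ofRealCLM.comp ((F' (nu n pt)) • nuL n pt)) pt :=
    Complex.ofRealCLM.hasFDerivAt.comp pt
      ((hF (nu n pt)).comp_hasFDerivAt pt (hasFDerivAt_nu n pt))
  have hx : ∀ j, pdx n j (fun q : Dom n => ((F (nu n q) : ℝ) : ℂ)) pt
      = ((F' (nu n pt) * (2 * pt.1 j) : ℝ) : ℂ) := by
    intro j
    simp [pdx, hcr.fderiv, nuL_ex]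
  have hy : ∀ j, pdy n j (fun q : Dom n => ((F (nu n q) : ℝ) : ℂ)) pt
      = ((F' (nu n pt) * (2 * pt.2 j) : ℝ) : ℂ) := by
    intro j
    simp [pdy, hcr.fderiv, nuL_ey]
  unfold DzdScalar zvec
  rw [Finset.smul_sum]
  apply Finset.sum_congr rfl
  intro j _
  rw [hx j, hy j, smul_smul]
  congr 1
  simp [zc]
  ring

/-! ### One-dimensional toolkit -/

/-- The Gaussian profile `e^{-t/2}`. -/
def Ee : ℝ → ℝ := fun t => Real.exp (-(1 / 2) * t)

/-- Polynomial given by coefficients. -/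
def Pp (N : ℕ) (a : ℕ → ℝ) (t : ℝ) : ℝ := ∑ k ∈ Finset.range N, a k * t ^ k

/-- Coefficient operation corresponding to `d/dt` on `P(t) e^{-t/2}`. -/
def Dc (a : ℕ → ℝ) : ℕ → ℝ := fun k => ((k : ℝ) + 1) * a (k + 1) - a k / 2

lemma hasDerivAt_Ee (t : ℝ) : HasDerivAt Ee (-(1 / 2) * Ee t) t := by
  have h : HasDerivAt (fun t : ℝ => -(1 / 2) * t) (-(1 / 2)) t := by
    simpa using (hasDerivAt_id t).const_mul (-(1/2 : ℝ))
  unfold Ee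
  simpa [mul_comm] using h.exp

lemma hasDerivAt_Pp (N : ℕ) (a : ℕ → ℝ) (t : ℝ) :
    HasDerivAt (Pp N a) (∑ k ∈ Finset.range N, a k * ((k : ℝ) * t ^ (k - 1))) t := by
  have : ∀ k ∈ Finset.range N, HasDerivAt (fun t : ℝ => a k * t ^ k)
      (a k * ((k : ℝ) * t ^ (k - 1))) t := fun k _ => (hasDerivAt_pow k t).const_mul (a k)
  exact HasDerivAt.fun_sum this

lemma Pp_shift (N : ℕ) (a : ℕ → ℝ) (t : ℝ) (hN : a N = 0) :
    ∑ k ∈ Finset.range N, a k * ((k : ℝ) * t ^ (k - 1))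
      = ∑ k ∈ Finset.range N, ((k : ℝ) + 1) * a (k + 1) * t ^ k := by
  have h1 : ∑ k ∈ Finset.range (N + 1), a k * ((k : ℝ) * t ^ (k - 1))
      = ∑ k ∈ Finset.range N, a (k + 1) * (((k : ℝ) + 1) * t ^ k) + a 0 * ((0 : ℝ) * t ^ (0 - 1)) := by
    simpa using Finset.sum_range_succ' (fun k => a k * ((k : ℝ) * t ^ (k - 1))) N
  have h2 : ∑ k ∈ Finset.range (N + 1), a k * ((k : ℝ) * t ^ (k - 1))
      = ∑ k ∈ Finset.range N, a k * ((k : ℝ) * t ^ (k - 1)) + a N * ((N : ℝ) * t ^ (N - 1)) :=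
    Finset.sum_range_succ _ N
  rw [hN] at h2
  simp at h2
  rw [← h2, h1]
  simp
  apply Finset.sum_congr rfl
  intro k _
  ring

lemma hasDerivAt_PE {N : ℕ} {a : ℕ → ℝ} (h : ∀ k, N ≤ k → a k = 0) (t : ℝ) :
    HasDerivAt (fun t => Pp N a t * Ee t) (Pp N (Dc a) t * Ee t) t := by
  have : HasDerivAt (fun t => Pp N a t * Ee t) _ t := (hasDerivAt_Pp N a t).mul (hasDerivAt_Ee t)
  convert this using 1
  rw [Pp_shift N a t (h N le_rfl)]
  unfold Pp
  have hdc : ∑ k ∈ Finset.range N, Dc a k * t ^ k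
      = ∑ k ∈ Finset.range N, (((k : ℝ) + 1) * a (k + 1) * t ^ k - a k / 2 * t ^ k) := by
    apply Finset.sum_congr rfl; intro k _; simp [Dc]; ring
  rw [hdc, Finset.sum_sub_distrib, sub_mul]
  have h2 : ∑ x ∈ Finset.range N, a x / 2 * t ^ x = (∑ k ∈ Finset.range N, a k * t ^ k) / 2 := by
    rw [Finset.sum_div]; exact Finset.sum_congr rfl fun k _ => by ring
  rw [h2]; ring

lemma Dc_supp {N : ℕ} {a : ℕ → ℝ} (h : ∀ k, N ≤ k → a k = 0) :
    ∀ k, N ≤ k → Dc a k = 0 := by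
  intro k hk
  simp [Dc, h k hk, h (k + 1) (by omega)]

/-! ### The coefficients -/

/-- Coefficients of the polynomial part of `Δ^p e^{-ν/2}`. -/
def coefA (n p : ℕ) : ℕ → ℝ := fun k =>
  if k ≤ p then
    (-2 : ℝ) ^ p * p.factorial * (-1) ^ k * ((p + n - 1).choose (p - k))
      / (2 ^ k * k.factorial)
  else 0

lemma coefA_supp (n p : ℕ) : ∀ k, p + 1 ≤ k → coefA n p k = 0 := by
  intro k hk; simp [coefA]; omega

-- C1 : first derivative coefficients
lemma C1 (n' p k : ℕ) (hk : k ≤ p) :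
    Dc (coefA (n' + 1) p) k
      = -(1/2) * (-2 : ℝ) ^ p * p.factorial * (-1) ^ k * ((p + n' + 1).choose (p - k))
          / (2 ^ k * k.factorial) := by
  have hM : p + (n' + 1) - 1 = p + n' := by omega
  rcases Nat.lt_or_ge k p with hkp | hkp
  · -- k + 1 ≤ p
    obtain ⟨q, hq⟩ : ∃ q, p = k + 1 + q := ⟨p - k - 1, by omega⟩
    subst hq
    have h1 : k + 1 + q - k = q + 1 := by omega
    have h2 : k + 1 + q - (k + 1) = q := by omega
    have hpas : (k + 1 + q + n' + 1).choose (q + 1)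
        = (k + 1 + q + n').choose q + (k + 1 + q + n').choose (q + 1) := by
      simpa using Nat.choose_succ_succ (k + 1 + q + n') q
    simp only [Dc, coefA, hM, if_pos (by omega : k ≤ k + 1 + q),
      if_pos (by omega : k + 1 ≤ k + 1 + q), h1, h2, hpas]
    have hf : ((k+1).factorial : ℝ) = (k+1) * k.factorial := by
      push_cast [Nat.factorial_succ]; ring
    have hne1 : ((2:ℝ)^k) ≠ 0 := by positivity
    have hne2 : ((k.factorial : ℝ)) ≠ 0 := by exact_mod_cast Nat.factorial_ne_zero k
    have hne3 : ((k:ℝ)+1) ≠ 0 := by positivity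
    push_cast [hf]
    field_simp
    ring
  · have hkeq : k = p := by omega
    subst hkeq
    simp only [Dc, coefA, hM, if_pos le_rfl, if_neg (by omega : ¬ k + 1 ≤ k), Nat.sub_self,
      Nat.choose_zero_right]
    push_cast
    ring

lemma C2zero (n' p : ℕ) :
    4 * ((n' + 1 : ℕ) : ℝ) * (Dc (coefA (n' + 1) p) 0) = coefA (n' + 1) (p + 1) 0 := by
  have hM : p + (n' + 1) - 1 = p + n' := by omega
  have hM' : p + 1 + (n' + 1) - 1 = p + n' + 1 := by omega
  rcases Nat.eq_zero_or_pos p with hp | hp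
  · subst hp
    simp only [Dc, coefA, hM, hM', if_pos (by omega : (0:ℕ) ≤ 0), if_neg (by omega : ¬ (1:ℕ) ≤ 0),
      if_pos (by omega : (0:ℕ) ≤ 1)]
    simp [Nat.choose_one_right]
    push_cast
    ring
  · obtain ⟨q, hq⟩ : ∃ q, p = q + 1 := ⟨p - 1, by omega⟩
    subst hq
    have e1 : q + 1 - 0 = q + 1 := by omega
    have e2 : q + 1 - 1 = q := by omega
    have e3 : q + 1 + 1 - 0 = q + 2 := by omega
    have hpas : (q + 1 + n' + 1).choose (q + 1)
        = (q + 1 + n').choose q + (q + 1 + n').choose (q + 1) := by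
      simpa using Nat.choose_succ_succ (q + 1 + n') q
    have hright := Nat.choose_succ_right_eq (q + 1 + n' + 1) (q + 1)
    have hsub : q + 1 + n' + 1 - (q + 1) = n' + 1 := by omega
    rw [hsub] at hright
    have hrightR : ((q + 1 + n' + 1).choose (q + 2) : ℝ) * (q + 2)
        = ((q + 1 + n' + 1).choose (q + 1) : ℝ) * (n' + 1) := by exact_mod_cast hright
    have hpasR : ((q + 1 + n' + 1).choose (q + 1) : ℝ)
        = ((q + 1 + n').choose q : ℝ) + ((q + 1 + n').choose (q + 1) : ℝ) := by
      exact_mod_cast hpas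
    have key : ((n' : ℝ) + 1) * (((q + 1 + n').choose q : ℝ) + ((q + 1 + n').choose (q + 1) : ℝ))
        = ((q : ℝ) + 2) * ((q + 1 + n' + 1).choose (q + 2) : ℝ) := by
      linear_combination (-(n' : ℝ) - 1) * hpasR - hrightR
    simp only [Dc, coefA, hM, hM', if_pos (by omega : (0:ℕ) ≤ q + 1),
      if_pos (by omega : (1:ℕ) ≤ q + 1), if_pos (by omega : (0:ℕ) ≤ q + 1 + 1), e1, e2, e3]
    push_cast [Nat.factorial_succ, Nat.factorial_zero]
    linear_combination ((-2:ℝ)^(q+2) * ((q:ℝ)+1) * (q.factorial : ℝ)) * key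

lemma C2succ (n' p k : ℕ) (hk : k ≤ p) :
    4 * Dc (Dc (coefA (n' + 1) p)) k + 4 * ((n' + 1 : ℕ) : ℝ) * (Dc (coefA (n' + 1) p) (k + 1))
      = coefA (n' + 1) (p + 1) (k + 1) := by
  have hM : p + (n' + 1) - 1 = p + n' := by omega
  have hM' : p + 1 + (n' + 1) - 1 = p + n' + 1 := by omega
  have hfk : ((k + 1).factorial : ℝ) = ((k : ℝ) + 1) * k.factorial := by
    push_cast [Nat.factorial_succ]; ring
  have hfk2 : ((k + 2).factorial : ℝ) = ((k : ℝ) + 2) * ((k : ℝ) + 1) * k.factorial := by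
    push_cast [Nat.factorial_succ]; ring
  have hne1 : ((2:ℝ)^k) ≠ 0 := by positivity
  have hne2 : ((k.factorial : ℕ) : ℝ) ≠ 0 := by exact_mod_cast Nat.factorial_ne_zero k
  have hne3 : ((k:ℝ)+1) ≠ 0 := by positivity
  have hne4 : ((k:ℝ)+2) ≠ 0 := by positivity
  rcases Nat.lt_or_ge (k + 1) p with hkp | hkp
  · -- case A : k + 2 ≤ p
    obtain ⟨q, hq⟩ : ∃ q, p = k + 2 + q := ⟨p - k - 2, by omega⟩
    subst hq
    set M := k + 2 + q + n' with hMdef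
    have e0 : k + 2 + q - k = q + 2 := by omega
    have e1 : k + 2 + q - (k + 1) = q + 1 := by omega
    have e2 : k + 2 + q - (k + 2) = q := by omega
    have e3 : k + 2 + q + 1 - (k + 1) = q + 2 := by omega
    have H2 := Nat.choose_succ_right_eq M q
    have hs2 : M - q = k + n' + 2 := by omega
    rw [hs2] at H2
    have H3 := Nat.choose_succ_right_eq M (q + 1)
    have hs3 : M - (q + 1) = k + n' + 1 := by omega
    rw [hs3] at H3
    have HP : (M + 1).choose (q + 2) = M.choose (q + 1) + M.choose (q + 2) := by
      simpa using Nat.choose_succ_succ M (q + 1)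
    have H2R : (M.choose (q+1) : ℝ) * ((q:ℝ)+1) = (M.choose q : ℝ) * ((k:ℝ)+(n':ℝ)+2) := by
      exact_mod_cast H2
    have H3R : (M.choose (q+2) : ℝ) * ((q:ℝ)+2) = (M.choose (q+1) : ℝ) * ((k:ℝ)+(n':ℝ)+1) := by
      exact_mod_cast H3
    have HPR : ((M+1).choose (q+2) : ℝ) = (M.choose (q+1) : ℝ) + (M.choose (q+2) : ℝ) := by
      exact_mod_cast HP
    have key : ((k:ℝ)+(n':ℝ)+2) * (M.choose q : ℝ) + (2*(k:ℝ)+(n':ℝ)+3) * (M.choose (q+1) : ℝ)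
        + ((k:ℝ)+1) * (M.choose (q+2) : ℝ)
        = ((k:ℝ)+(q:ℝ)+3) * ((M+1).choose (q+2) : ℝ) := by
      linear_combination -H2R - H3R - ((k:ℝ)+(q:ℝ)+3) * HPR
    set u : ℝ := (-2 : ℝ) ^ (k+2+q) * ((k+2+q).factorial : ℝ) * (-1 : ℝ)^k
        / (2 ^ (k+2) * ((k+2).factorial : ℝ)) with hu
    have ha0 : coefA (n'+1) (k+2+q) k = u * (4 * ((k:ℝ)+1) * ((k:ℝ)+2) * (M.choose (q+2) : ℝ)) := by
      simp only [coefA, if_pos (by omega : k ≤ k+2+q), hM, e0, hu]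
      rw [hfk2]
      field_simp
      ring
    have ha1 : coefA (n'+1) (k+2+q) (k+1)
        = u * (-2 * ((k:ℝ)+2) * (M.choose (q+1) : ℝ)) := by
      simp only [coefA, if_pos (by omega : k+1 ≤ k+2+q), hM, e1, hu]
      rw [hfk2, hfk]
      push_cast [pow_succ]
      field_simp
      try ring
    have ha2 : coefA (n'+1) (k+2+q) (k+2) = u * ((M.choose q : ℝ)) := by
      simp only [coefA, if_pos (by omega : k+2 ≤ k+2+q), hM, e2, hu]
      push_cast [pow_succ]
      field_simp
      try ring
    have haR : coefA (n'+1) (k+2+q+1) (k+1)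
        = u * (4 * ((k:ℝ)+(q:ℝ)+3) * ((k:ℝ)+2) * ((M+1).choose (q+2) : ℝ)) := by
      simp only [coefA, if_pos (by omega : k+1 ≤ k+2+q+1), hM', e3, hu]
      rw [hfk2, hfk]
      push_cast [pow_succ, Nat.factorial_succ]
      field_simp
      ring
    simp only [Dc, ha0, ha1, ha2, haR]
    push_cast
    linear_combination (4 * ((k:ℝ)+2) * u) * key
  · rcases Nat.lt_or_ge k p with hkp2 | hkp2
    · -- case B : k + 1 = p
      have hp : p = k + 1 := by omega
      subst hp
      have e0 : k + 1 - k = 1 := by omega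
      have e1 : k + 1 - (k + 1) = 0 := by omega
      have e3 : k + 1 + 1 - (k + 1) = 1 := by omega
      simp only [Dc, coefA, hM, hM', if_pos (by omega : k ≤ k+1), if_pos (by omega : k+1 ≤ k+1),
        if_neg (by omega : ¬ k+2 ≤ k+1), if_pos (by omega : k+1 ≤ k+2), e0, e1, e3,
        Nat.choose_zero_right, Nat.choose_one_right]
      rw [hfk]
      push_cast [pow_succ, Nat.factorial_succ]
      field_simp
      ring
    · -- case C : k = p
      have hp : p = k := by omega
      subst hp
      have z1 : coefA (n' + 1) p (p + 1) = 0 := by simp only [coefA, if_neg (by omega : ¬ p + 1 ≤ p)]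
      have z2 : coefA (n' + 1) p (p + 1 + 1) = 0 := by simp only [coefA, if_neg (by omega : ¬ p + 1 + 1 ≤ p)]
      have e1 : p - p = 0 := by omega
      have e3 : p + 1 - (p + 1) = 0 := by omega
      simp only [Dc, z1, z2]
      simp only [coefA, if_pos (le_refl p), if_pos (by omega : p + 1 ≤ p + 1), hM, hM', e1, e3,
        Nat.choose_zero_right]
      rw [hfk]
      push_cast [pow_succ]
      field_simp
      try ring


/-! ### Assembling the pieces -/

lemma poly_step (n' p : ℕ) (t : ℝ) :
    4 * t * Pp (p + 1) (Dc (Dc (coefA (n' + 1) p))) t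
      + 4 * ((n' + 1 : ℕ) : ℝ) * Pp (p + 1) (Dc (coefA (n' + 1) p)) t
      = Pp (p + 2) (coefA (n' + 1) (p + 1)) t := by
  have hsuppD : ∀ k, p + 1 ≤ k → Dc (coefA (n' + 1) p) k = 0 :=
    Dc_supp (coefA_supp (n' + 1) p)
  have hD1ext : Pp (p + 1) (Dc (coefA (n' + 1) p)) t = Pp (p + 2) (Dc (coefA (n' + 1) p)) t := by
    unfold Pp
    rw [Finset.sum_range_succ (n := p + 1), hsuppD (p + 1) le_rfl]
    ring
  have h1 : 4 * t * Pp (p + 1) (Dc (Dc (coefA (n' + 1) p))) t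
      = ∑ k ∈ Finset.range (p + 1), (4 * Dc (Dc (coefA (n' + 1) p)) k) * t ^ (k + 1) := by
    unfold Pp
    rw [Finset.mul_sum]
    apply Finset.sum_congr rfl
    intro k _
    ring
  have h2 : 4 * ((n' + 1 : ℕ) : ℝ) * Pp (p + 2) (Dc (coefA (n' + 1) p)) t
      = ∑ k ∈ Finset.range (p + 1),
          (4 * ((n' + 1 : ℕ) : ℝ) * Dc (coefA (n' + 1) p) (k + 1)) * t ^ (k + 1)
        + 4 * ((n' + 1 : ℕ) : ℝ) * Dc (coefA (n' + 1) p) 0 := by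
    unfold Pp
    rw [Finset.mul_sum,
      Finset.sum_range_succ' (fun k => 4 * ((n' + 1 : ℕ) : ℝ) * (Dc (coefA (n' + 1) p) k * t ^ k)) (p + 1)]
    simp
    apply Finset.sum_congr rfl
    intro k _
    ring
  have h3 : Pp (p + 2) (coefA (n' + 1) (p + 1)) t
      = ∑ k ∈ Finset.range (p + 1), (coefA (n' + 1) (p + 1) (k + 1)) * t ^ (k + 1)
        + coefA (n' + 1) (p + 1) 0 := by
    unfold Pp
    rw [Finset.sum_range_succ' (fun k => coefA (n' + 1) (p + 1) k * t ^ k) (p + 1)]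
    simp
  rw [h1, hD1ext, h2, h3, ← C2zero n' p]
  rw [← add_assoc, ← Finset.sum_add_distrib]
  congr 1
  apply Finset.sum_congr rfl
  intro k hk
  rw [Finset.mem_range] at hk
  rw [← C2succ n' p k (by omega)]
  ring

lemma iterate_lap (n' p : ℕ) :
    (Lap (n' + 1))^[p] (Gauss (n' + 1))
      = fun q => Pp (p + 1) (coefA (n' + 1) p) (nu (n' + 1) q) * Ee (nu (n' + 1) q) := by
  induction p with
  | zero =>
    funext q
    simp [Gauss, Ee, Pp, coefA]
  | succ p ih =>
    rw [Function.iterate_succ_apply', ih]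
    have hF : ∀ t, HasDerivAt (fun t => Pp (p + 1) (coefA (n' + 1) p) t * Ee t)
        (Pp (p + 1) (Dc (coefA (n' + 1) p)) t * Ee t) t :=
      fun t => hasDerivAt_PE (coefA_supp (n' + 1) p) t
    have hF' : ∀ t, HasDerivAt (fun t => Pp (p + 1) (Dc (coefA (n' + 1) p)) t * Ee t)
        (Pp (p + 1) (Dc (Dc (coefA (n' + 1) p))) t * Ee t) t :=
      fun t => hasDerivAt_PE (Dc_supp (coefA_supp (n' + 1) p)) t
    rw [lap_comp hF hF']
    funext q
    have := poly_step n' p (nu (n' + 1) q)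
    have hgoal : 4 * nu (n' + 1) q * (Pp (p + 1) (Dc (Dc (coefA (n' + 1) p))) (nu (n' + 1) q)
          * Ee (nu (n' + 1) q))
        + 4 * ((n' + 1 : ℕ) : ℝ) * (Pp (p + 1) (Dc (coefA (n' + 1) p)) (nu (n' + 1) q)
          * Ee (nu (n' + 1) q))
        = Pp (p + 2) (coefA (n' + 1) (p + 1)) (nu (n' + 1) q) * Ee (nu (n' + 1) q) := by
      rw [← this]
      ring
    rw [← hgoal]

lemma final_coef (n' p : ℕ) (t : ℝ) :
    ((Pp (p + 1) (Dc (coefA (n' + 1) p)) t : ℝ) : ℂ)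
      = -(2⁻¹ : ℂ) * (-2 : ℂ) ^ p * (p.factorial : ℂ)
          * Laguerre p (n' + 1) ((t : ℂ) / 2) := by
  unfold Pp Laguerre
  push_cast
  rw [Finset.mul_sum]
  apply Finset.sum_congr rfl
  intro k hk
  rw [Finset.mem_range] at hk
  have hC1 := C1 n' p k (by omega)
  rw [hC1]
  have e : p + (n' + 1) = p + n' + 1 := by omega
  rw [e]
  have hne1 : ((2:ℂ)^k) ≠ 0 := pow_ne_zero k two_ne_zero
  have hne2 : ((k.factorial : ℕ) : ℂ) ≠ 0 := by
    exact_mod_cast Nat.cast_ne_zero.mpr (Nat.factorial_ne_zero k)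
  push_cast
  rw [div_pow]
  field_simp

/-- The Rodrigues-type formula
`∂_z†(Δ^p G) = −(1/2)(−2)^p p! L_p^{(n)}(|z|²/2) 𝐳 G`, i.e. in the paper's
notation `H^{(1)}_{2p+1}(𝐳,𝐳†) = (−1)^{p−1} 2^{p−1} p! 𝐳 L_p^n(|𝐳|²/2)`. -/

theorem rodrigues_hermite_laguerre (n : ℕ) (hn : 1 ≤ n) (p : ℕ) :
    ∀ pt : Dom n,
      DzdScalar n (fun q => (((Lap n)^[p] (Gauss n)) q : ℂ)) pt =
        (-(2⁻¹ : ℂ) * (-2 : ℂ) ^ p * (p.factorial : ℂ) *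
            Laguerre p n (((nu n pt : ℂ)) / 2) * (Gauss n pt : ℂ)) •
          zvec n (zc n pt) := by
  obtain ⟨n', rfl⟩ : ∃ n', n = n' + 1 := ⟨n - 1, by omega⟩
  intro pt
  rw [iterate_lap n' p]
  have hF : ∀ t, HasDerivAt (fun t => Pp (p + 1) (coefA (n' + 1) p) t * Ee t)
      (Pp (p + 1) (Dc (coefA (n' + 1) p)) t * Ee t) t :=
    fun t => hasDerivAt_PE (coefA_supp (n' + 1) p) t
  have hd := dzd_comp (n := n' + 1) hF pt
  have hscal : ((Pp (p + 1) (Dc (coefA (n' + 1) p)) (nu (n' + 1) pt)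
        * Ee (nu (n' + 1) pt) : ℝ) : ℂ)
      = -(2⁻¹ : ℂ) * (-2 : ℂ) ^ p * (p.factorial : ℂ)
          * Laguerre p (n' + 1) (((nu (n' + 1) pt : ℝ) : ℂ) / 2)
          * ((Gauss (n' + 1) pt : ℝ) : ℂ) := by
    rw [Complex.ofReal_mul, final_coef n' p]
    have hG : ((Gauss (n' + 1) pt : ℝ) : ℂ) = ((Ee (nu (n' + 1) pt) : ℝ) : ℂ) := rfl
    rw [hG]
  exact hd.trans (by rw [hscal])
end
end

section
/- Let n ≥ 1 be a natural number, s ∈ ℝ, ℓ ∈ ℂ, and α₁, α₂ ∈ ℝ. Define a_{0,1}(ν) = α₁ ν^s and a_{0,2}(ν) = α₂ ν^{s−1} for ν > 0, and for k ≥ 0 define δ(k) = ((−1)^k ∏_{j=1}^k (s−j)(n+s−j) / ((k+1)(k!)²)) · ((ℓ−n−s)α₂ − α₁ s) ∈ ℂ and c_k : (0,∞) → ℂ, c_k(ν) = δ(k) ν^{s−k−1}. Then these functions solve the Hermitian Vekua recurrence for generalized powers: c_0(ν) = (ℓ−n−1)a_{0,2}(ν) − a_{0,1}′(ν) − ν a_{0,2}′(ν)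 for all ν > 0, and for every k ≥ 1 and all ν > 0, c_k(ν) = −(1/(k(k+1)))((n+1) c_{k−1}′(ν) + ν c_{k−1}″(ν)). Moreover, if s is a positive integer then δ(k) = 0 for all k ≥ s. -/
lemma pow_hasDeriv (β : ℂ) (t : ℝ) {ν : ℝ} (hν : ν ≠ 0) :
    HasDerivAt (fun x : ℝ => β * ((x ^ t : ℝ) : ℂ))
      (β * (((t * ν ^ (t - 1)) : ℝ) : ℂ)) ν :=
  ((Real.hasDerivAt_rpow_const (Or.inl hν)).ofReal_comp).const_mul β

lemma pow_deriv (β : ℂ) (t : ℝ) {ν : ℝ} (hν : ν ≠ 0) :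
    deriv (fun x : ℝ => β * ((x ^ t : ℝ) : ℂ)) ν
      = β * (((t * ν ^ (t - 1)) : ℝ) : ℂ) :=
  (pow_hasDeriv β t hν).deriv

lemma pow_deriv2 (β : ℂ) (t : ℝ) {ν : ℝ} (hν : ν ≠ 0) :
    deriv (deriv (fun x : ℝ => β * ((x ^ t : ℝ) : ℂ))) ν
      = β * ((t : ℂ)) * ((((t - 1) * ν ^ (t - 2)) : ℝ) : ℂ) := by
  have h1 : deriv (fun x : ℝ => β * ((x ^ t : ℝ) : ℂ))
      =ᶠ[nhds ν] (fun x : ℝ => (β * (t : ℂ)) * ((x ^ (t - 1) : ℝ) : ℂ)) := by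
    filter_upwards [eventually_ne_nhds hν] with x hx
    rw [pow_deriv β t hx]
    push_cast
    ring
  rw [h1.deriv_eq, pow_deriv (β * (t : ℂ)) (t - 1) hν]
  norm_num [show t - 1 - 1 = t - 2 from by ring]

/-- The Hermitian Vekua recurrence for generalized powers: with
initial data `a_{0,1}(ν) = α₁ν^s`, `a_{0,2}(ν) = α₂ν^{s−1}`, the functions
`c_k(ν) = δ(k) ν^{s−k−1}` with
`δ(k) = ((−1)^k ∏_{j=1}^k (s−j)(n+s−j)/((k+1)(k!)²))((ℓ−n−s)α₂ − α₁s)`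
solve `c_0 = (ℓ−n−1)a_{0,2} − a_{0,1}′ − ν a_{0,2}′` and
`c_k = −(1/(k(k+1)))((n+1)c_{k−1}′ + ν c_{k−1}″)` on `(0,∞)`; moreover if `s` is
a positive integer then `δ(k) = 0` for all `k ≥ s`. -/
theorem hermitian_generalized_powers (n : ℕ) (hn : 1 ≤ n) (s : ℝ) (l : ℂ)
    (α₁ α₂ : ℝ) (a01 a02 : ℝ → ℂ)
    (ha01 : ∀ ν : ℝ, a01 ν = (α₁ : ℂ) * ((ν ^ s : ℝ) : ℂ))
    (ha02 : ∀ ν : ℝ, a02 ν = (α₂ : ℂ) * ((ν ^ (s - 1) : ℝ) : ℂ))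
    (δ : ℕ → ℂ)
    (hδ : ∀ k : ℕ, δ k =
      ((-1 : ℂ) ^ k *
          (∏ j ∈ Finset.range k,
            ((((s - (j + 1)) * ((n : ℝ) + s - (j + 1))) : ℝ) : ℂ)) /
        (((k : ℂ) + 1) * ((k.factorial : ℂ)) ^ 2)) *
      ((l - (n : ℂ) - (s : ℂ)) * (α₂ : ℂ) - (α₁ : ℂ) * (s : ℂ)))
    (c : ℕ → ℝ → ℂ)
    (hc : ∀ (k : ℕ) (ν : ℝ), c k ν = δ k * ((ν ^ (s - (k : ℝ) - 1) : ℝ) : ℂ)) :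
    (∀ ν : ℝ, 0 < ν →
      c 0 ν = (l - (n : ℂ) - 1) * a02 ν - deriv a01 ν - (ν : ℂ) * deriv a02 ν) ∧
    (∀ k : ℕ, 1 ≤ k → ∀ ν : ℝ, 0 < ν →
      c k ν = -(1 / ((k : ℂ) * ((k : ℂ) + 1))) *
        (((n : ℂ) + 1) * deriv (c (k - 1)) ν +
          (ν : ℂ) * deriv (deriv (c (k - 1))) ν)) ∧
    (∀ m : ℕ, 0 < m → s = (m : ℝ) → ∀ k : ℕ, m ≤ k → δ k = 0) := by
  have e1 : a01 = fun x : ℝ => (α₁ : ℂ) * ((x ^ s : ℝ) : ℂ) := funext ha01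
  have e2 : a02 = fun x : ℝ => (α₂ : ℂ) * ((x ^ (s - 1) : ℝ) : ℂ) := funext ha02
  refine ⟨?_, ?_, ?_⟩
  · intro ν hν
    have hν' : ν ≠ 0 := hν.ne'
    rw [hc, hδ, e1, e2, pow_deriv _ _ hν', pow_deriv _ _ hν']
    have key : ((ν : ℂ)) * ((ν ^ (s - 1 - 1) : ℝ) : ℂ) = ((ν ^ (s - 1) : ℝ) : ℂ) := by
      rw [show s - 1 = (s - 1 - 1) + 1 from by ring, Real.rpow_add_one hν']
      push_cast; ring
    push_cast
    simp only [Nat.cast_zero, sub_zero, Finset.range_zero, Finset.prod_empty,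
      Nat.factorial_zero, Nat.cast_one]
    linear_combination ((α₂ : ℂ)) * (s - 1) * key
  · intro k hk ν hν
    have hν' : ν ≠ 0 := hν.ne'
    obtain ⟨m, rfl⟩ : ∃ m, k = m + 1 := ⟨k - 1, (Nat.succ_pred_eq_of_pos hk).symm⟩
    simp only [Nat.add_sub_cancel]
    have ec : c m = fun x : ℝ => δ m * ((x ^ (s - (m : ℝ) - 1) : ℝ) : ℂ) := by
      funext x; rw [hc]
    rw [ec, hc, pow_deriv _ _ hν', pow_deriv2 _ _ hν']
    have hfac : ((m.factorial : ℂ)) ≠ 0 :=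
      Nat.cast_ne_zero.mpr (Nat.factorial_ne_zero m)
    have hm1 : ((m : ℂ) + 1) ≠ 0 := Nat.cast_add_one_ne_zero m
    have hm2 : ((m : ℂ) + 2) ≠ 0 := by exact_mod_cast Nat.succ_ne_zero (m + 1)
    have hrec : ((m : ℂ) + 1) * ((m : ℂ) + 2) * δ (m + 1)
        = -(((s : ℂ) - ((m : ℂ) + 1)) * ((n : ℂ) + (s : ℂ) - ((m : ℂ) + 1))) * δ m := by
      rw [hδ, hδ, Finset.prod_range_succ, Nat.factorial_succ]
      push_cast
      have hD : ((m : ℂ) + 1 + 1) * (((m : ℂ) + 1) * (m.factorial : ℂ)) ^ 2 ≠ 0 := by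
        refine mul_ne_zero ?_ (pow_ne_zero _ (mul_ne_zero hm1 hfac))
        rw [show (m : ℂ) + 1 + 1 = (m : ℂ) + 2 from by ring]; exact hm2
      have hm3 : ((m : ℂ) + 1 + 1) ≠ 0 := by
        rw [show (m : ℂ) + 1 + 1 = (m : ℂ) + 2 from by ring]; exact hm2
      field_simp
      ring
    have key : ((ν : ℂ)) * ((ν ^ (s - (m : ℝ) - 1 - 2) : ℝ) : ℂ)
        = ((ν ^ (s - (m : ℝ) - 1 - 1) : ℝ) : ℂ) := by
      rw [show s - (m : ℝ) - 1 - 1 = (s - (m : ℝ) - 1 - 2) + 1 from by ring,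
        Real.rpow_add_one hν']
      push_cast; ring
    rw [show s - ((m + 1 : ℕ) : ℝ) - 1 = s - (m : ℝ) - 1 - 1 from by push_cast; ring]
    push_cast
    rw [← key]
    push_cast
    rw [show ∀ Q : ℂ, -(1 / (((m : ℂ) + 1) * ((m : ℂ) + 1 + 1))) * Q
        = -Q / (((m : ℂ) + 1) * ((m : ℂ) + 1 + 1)) from fun Q => by ring]
    rw [eq_div_iff (mul_ne_zero hm1 (by rw [show (m : ℂ) + 1 + 1 = (m : ℂ) + 2 from by ring]; exact hm2))]
    linear_combination ((ν : ℂ) * ((ν ^ (s - (m : ℝ) - 1 - 2) : ℝ) : ℂ)) * hrec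
  · intro m hm hs k hk
    rw [hδ]
    have hmem : (m - 1 : ℕ) ∈ Finset.range k :=
      Finset.mem_range.mpr (lt_of_lt_of_le (Nat.pred_lt hm.ne') hk)
    rw [Finset.prod_eq_zero hmem]
    · simp
    · have h1 : (((m - 1 : ℕ) : ℝ)) = (m : ℝ) - 1 := by
        push_cast [Nat.cast_sub hm]; ring
      rw [h1, hs]
      norm_num
end
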